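/- arXiv:1010.4989 — 9 statements merged into one kernel-verified Lean document; each statement's English description precedes it below -/
import Mathlib

section
/- For all y ∈ ℝ and all z ∈ ℝ with z < −M', one has h(y, z) > 0. -/
open Real Set

/-- The right-hand side of the ODE g''(y) = h(y, g'(y)). -/
noncomputable def h (μ σ δ y z : ℝ) : ℝ :=
  (-(2*μ)/σ^2 + 2/(1 + exp (-y)))
  + ((4*μ)/σ^2 - 2/(1 + exp (-y)) - 1 - (2*δ/σ^2)*(1 + exp y)) * z
  + (-(2*μ)/σ^2 + 1 + (4*δ/σ^2)*(1 + exp y)) * z^2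
  - (2*δ/σ^2)*(1 + exp y) * z^3

/-- The constant M' from the proof of Proposition p:FBVP. -/
noncomputable def M' (μ σ δ : ℝ) : ℝ :=
  max ((4*(μ + σ^2)/δ) ^ ((1:ℝ)/3))
    (max (Real.sqrt (8*μ/δ)) (8 + (4*μ + 2*σ^2)/δ))

private lemma key (μ s δ F E w : ℝ) (hs : 0 < s) (hμ : 0 < μ) (hμs : μ < s) (hδ : 0 < δ)
    (hF : 0 < F) (hE : 1 ≤ E) (hw : 8 + (4*μ + 2*s)/δ < w) :
    0 < (-(2*μ)/s + F) + ((4*μ)/s - F - 1 - (2*δ/s)*E) * (-w)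
      + (-(2*μ)/s + 1 + (4*δ/s)*E) * w^2 - (2*δ/s)*E * (-w)^3 := by
  have hw8 : 8 < w := by nlinarith [div_pos (by linarith : (0:ℝ) < 4*μ+2*s) hδ]
  have hw0 : 0 < w := by linarith
  have hdw : 8*δ + 4*μ + 2*s < δ*w := by
    have := (div_lt_iff₀ hδ).mp (by linarith : (4*μ+2*s)/δ < w - 8)
    nlinarith
  have hrw : (-(2*μ)/s + F) + ((4*μ)/s - F - 1 - (2*δ/s)*E) * (-w)
      + (-(2*μ)/s + 1 + (4*δ/s)*E) * w^2 - (2*δ/s)*E * (-w)^3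
      = (-2*μ + s*F + (-4*μ + s*F + s + 2*δ*E)*w + (-2*μ + s + 4*δ*E)*w^2 + 2*δ*E*w^3) / s := by
    field_simp
    ring
  rw [hrw]
  apply div_pos _ hs
  have hw2 : 0 < w^2 := by positivity
  have h1 : (8*δ + 4*μ + 2*s) * w^2 < δ*w*w^2 := mul_lt_mul_of_pos_right hdw hw2
  have h2 : 0 ≤ (E-1)*w^3*δ := mul_nonneg (mul_nonneg (by linarith) (by positivity)) hδ.le
  have h3 : 0 < s*F*(w+1) := by positivity
  have h4 : 0 ≤ δ*E*w^2 := by positivity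
  have h5 : 0 ≤ δ*E*w := by positivity
  nlinarith [mul_pos hw0 hw0, mul_lt_mul_of_pos_right hw8 hw0, mul_pos hs hw0, mul_pos hμ hw0]

/-- For slopes below -M', the right-hand side of the ODE is positive. -/
theorem h_pos_of_lt_neg_M'
    (μ σ δ : ℝ) (hμ : 0 < μ) (hμσ : μ < σ^2) (hδ : 0 < δ) :
    ∀ y z : ℝ, z < -(M' μ σ δ) → 0 < h μ σ δ y z := by
  intro y z hz
  have hs : 0 < σ^2 := lt_trans hμ hμσ
  have hF : 0 < 2/(1 + exp (-y)) := by positivity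
  have hE : (1:ℝ) ≤ 1 + exp y := by nlinarith [exp_pos y]
  have hw : 8 + (4*μ + 2*σ^2)/δ < -z := by
    have h1 : 8 + (4*μ + 2*σ^2)/δ ≤ M' μ σ δ :=
      le_trans (le_max_right _ _) (le_max_right _ _)
    linarith
  have := key μ (σ^2) δ (2/(1 + exp (-y))) (1 + exp y) (-z) hs hμ hμσ hδ hF hE hw
  have hrw : h μ σ δ y z = (-(2*μ)/σ^2 + 2/(1 + exp (-y)))
      + ((4*μ)/σ^2 - 2/(1 + exp (-y)) - 1 - (2*δ/σ^2)*(1 + exp y)) * (-(-z))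
      + (-(2*μ)/σ^2 + 1 + (4*δ/σ^2)*(1 + exp y)) * (-z)^2
      - (2*δ/σ^2)*(1 + exp y) * (-(-z))^3 := by
    simp [h]
  rw [hrw]
  simpa using this
end

section
/- For all y ∈ ℝ and all z ∈ ℝ with z > M', one has h(y, z) < 0. -/
open Real Set

/-- For slopes above M', the right-hand side of the ODE is negative. -/
theorem h_neg_of_gt_M'
    (μ σ δ : ℝ) (hμ : 0 < μ) (hμσ : μ < σ^2) (hδ : 0 < δ) :
    ∀ y z : ℝ, M' μ σ δ < z → h μ σ δ y z < 0 := by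
  intro y z hz
  have hs : (0:ℝ) < σ^2 := hμ.trans hμσ
  -- third component of the max
  have hz1 : 8 + (4*μ + 2*σ^2)/δ < z :=
    lt_of_le_of_lt ((le_max_right _ _).trans (le_max_right _ _)) hz
  have hz8 : (8:ℝ) < z := by
    have : 0 < (4*μ + 2*σ^2)/δ := by positivity
    linarith
  have hz0 : (0:ℝ) < z := by linarith
  have h3 : 8*δ + 4*μ + 2*σ^2 < δ*z := by
    have := (div_lt_iff₀ hδ).mp (by linarith : (4*μ + 2*σ^2)/δ < z - 8)
    linarith
  set E := Real.exp y with hEdef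
  have hE : 0 < E := Real.exp_pos y
  have hF : 0 < Real.exp (-y) := Real.exp_pos (-y)
  set t := 2/(1 + Real.exp (-y)) with htdef
  have hF1 : (1:ℝ) < 1 + Real.exp (-y) := by linarith
  have ht0 : 0 < t := by positivity
  have ht2 : t < 2 := by
    rw [htdef]
    calc 2/(1 + Real.exp (-y)) < 2/1 :=
          div_lt_div_of_pos_left (by norm_num) (by norm_num) hF1
      _ = 2 := by norm_num
  -- rewrite σ^2 * h as a polynomial
  have hmul : σ^2 * h μ σ δ y z =
      (-(2*μ) + σ^2 * t) + ((4*μ) - σ^2*t - σ^2 - 2*δ*(1+E))*z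
      + (-(2*μ) + σ^2 + 4*δ*(1+E))*z^2 - 2*δ*(1+E)*z^3 := by
    unfold h
    rw [← htdef, ← hEdef]
    have hσ0 : σ ≠ 0 := by rintro rfl; simp at hs
    field_simp
  -- the polynomial is negative
  have h1 : z*(z/2)^2 ≤ z*(z-1)^2 := by
    nlinarith [mul_nonneg hz0.le (mul_nonneg (show (0:ℝ) ≤ z/2 - 1 by linarith)
      (show (0:ℝ) ≤ 3*z/2 - 1 by linarith))]
  have hcube : 2*δ*(z*(z/2)^2) ≤ 2*δ*(1+E)*(z*(z-1)^2) := by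
    nlinarith [mul_le_mul_of_nonneg_left h1 (by positivity : (0:ℝ) ≤ 2*δ),
      mul_nonneg (mul_nonneg hδ.le hE.le) (mul_nonneg hz0.le (sq_nonneg (z-1)))]
  have hpoly : (-(2*μ) + σ^2 * t) + ((4*μ) - σ^2*t - σ^2 - 2*δ*(1+E))*z
      + (-(2*μ) + σ^2 + 4*δ*(1+E))*z^2 - 2*δ*(1+E)*z^3 < 0 := by
    nlinarith [hcube,
      mul_pos (mul_pos hz0 hz0) (show (0:ℝ) < δ*z - 2*σ^2 by linarith),
      mul_pos (mul_pos hs ht0) (show (0:ℝ) < z - 1 by linarith),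
      mul_nonneg hμ.le (sq_nonneg (z-1)),
      mul_pos hs hz0]
  have hlt : σ^2 * h μ σ δ y z < 0 := by rw [hmul]; exact hpoly
  by_contra h0
  push_neg at h0
  nlinarith [mul_nonneg hs.le h0]
end

section
/- Let a < b be real numbers and let g : ℝ → ℝ be twice differentiable on [a, b] with g''(y) = h(y, g'(y)) for all y ∈ [a, b] and g'(a) = 0. Then g'(y) ∈ [−M', M'] for all y ∈ [a, b]. -/
open Real Set

lemma poly_neg (μ s δ t E M : ℝ) (hμ : 0 < μ) (hμs : μ < s) (hδ : 0 < δ)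
    (ht0 : 0 < t) (ht2 : t < 2) (hE : 1 < E) (hM8 : 8 ≤ M) (hsM : 2*s ≤ δ*M) :
    (-2*μ + t*s) + (4*μ - t*s - s - 2*δ*E)*M + (-2*μ + s + 4*δ*E)*M^2 - 2*δ*E*M^3 < 0 := by
  nlinarith [mul_pos hδ (by linarith : (0:ℝ) < E), mul_pos hμ (by linarith : (0:ℝ) < M),
    mul_nonneg (mul_nonneg hδ.le (by linarith : (0:ℝ) ≤ E - 1)) (by nlinarith : (0:ℝ) ≤ M^2*(M-2)),
    mul_nonneg (by linarith : (0:ℝ) ≤ δ*M - 2*s) (by nlinarith : (0:ℝ) ≤ M^2*(M-2)),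
    mul_nonneg (mul_nonneg ht0.le (by linarith : (0:ℝ) ≤ s)) (by linarith : (0:ℝ) ≤ M),
    mul_nonneg (mul_nonneg hδ.le (by linarith : (0:ℝ) ≤ E)) (by linarith : (0:ℝ) ≤ M),
    sq_nonneg M, sq_nonneg (M-8), mul_pos hμ hδ, mul_nonneg hμ.le (sq_nonneg M)]

lemma poly_pos (μ s δ t E M : ℝ) (hμ : 0 < μ) (hμs : μ < s) (hδ : 0 < δ)
    (ht0 : 0 < t) (ht2 : t < 2) (hE : 1 < E) (hM8 : 8 ≤ M) (hsM : 2*s ≤ δ*M) :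
    0 < (-2*μ + t*s) + (4*μ - t*s - s - 2*δ*E)*(-M) + (-2*μ + s + 4*δ*E)*M^2 + 2*δ*E*M^3 := by
  nlinarith [mul_pos hδ (by linarith : (0:ℝ) < E), mul_pos hμ (by linarith : (0:ℝ) < M),
    mul_nonneg (mul_nonneg hδ.le (by linarith : (0:ℝ) ≤ E - 1)) (by positivity : (0:ℝ) ≤ M^3),
    mul_nonneg (by linarith : (0:ℝ) ≤ δ*M - 2*s) (by positivity : (0:ℝ) ≤ M^2),
    mul_nonneg (mul_nonneg ht0.le (by linarith : (0:ℝ) ≤ s)) (by linarith : (0:ℝ) ≤ M),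
    mul_nonneg (mul_nonneg hδ.le (by linarith : (0:ℝ) ≤ E)) (by linarith : (0:ℝ) ≤ M),
    mul_nonneg (mul_nonneg hδ.le (by linarith : (0:ℝ) ≤ E)) (sq_nonneg M),
    sq_nonneg (M-8), mul_nonneg hμ.le (sq_nonneg M)]

lemma h_rewrite (μ σ δ y z : ℝ) (hs : 0 < σ^2) :
    h μ σ δ y z = ((-2*μ + (2/(1 + exp (-y)))*σ^2)
      + (4*μ - (2/(1 + exp (-y)))*σ^2 - σ^2 - 2*δ*(1 + exp y))*z
      + (-2*μ + σ^2 + 4*δ*(1 + exp y))*z^2 - 2*δ*(1 + exp y)*z^3) / σ^2 := by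
  have he : (0:ℝ) < 1 + exp (-y) := by positivity
  have hσ : σ ≠ 0 := by rintro rfl; simp at hs
  unfold h
  field_simp

lemma h_sign (μ σ δ : ℝ) (hμ : 0 < μ) (hμσ : μ < σ^2) (hδ : 0 < δ) (y M : ℝ)
    (hM : 8 + (4*μ + 2*σ^2)/δ ≤ M) :
    h μ σ δ y M < 0 ∧ 0 < h μ σ δ y (-M) := by
  have hs : 0 < σ^2 := hμ.trans hμσ
  have he : (0:ℝ) < 1 + exp (-y) := by positivity
  set t : ℝ := 2/(1 + exp (-y)) with ht
  have ht0 : 0 < t := by positivity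
  have ht2 : t < 2 := by
    rw [ht, div_lt_iff₀ he]
    nlinarith [exp_pos (-y)]
  have hE : 1 < 1 + exp y := by nlinarith [exp_pos y]
  have hpos : 0 < (4*μ + 2*σ^2)/δ := by positivity
  have hM8 : 8 ≤ M := by linarith
  have hsM : 2*σ^2 ≤ δ*M := by
    have : (4*μ + 2*σ^2)/δ ≤ M := by linarith
    rw [div_le_iff₀ hδ] at this
    nlinarith
  constructor
  · rw [h_rewrite μ σ δ y M hs]
    apply div_neg_of_neg_of_pos _ hs
    exact poly_neg μ (σ^2) δ t (1 + exp y) M hμ hμσ hδ ht0 ht2 hE hM8 hsM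
  · rw [h_rewrite μ σ δ y (-M) hs]
    apply div_pos _ hs
    have := poly_pos μ (σ^2) δ t (1 + exp y) M hμ hμσ hδ ht0 ht2 hE hM8 hsM
    nlinarith [this]

/-- A solution of the ODE g''(y) = h(y, g'(y)) on [a, b] starting with slope 0
has slope bounded by M' in absolute value. -/
theorem deriv_bounded_of_ODE
    (μ σ δ a b : ℝ) (hμ : 0 < μ) (hμσ : μ < σ^2) (hδ : 0 < δ) (hab : a < b)
    (g : ℝ → ℝ)
    (hg : ∀ y ∈ Icc a b, DifferentiableAt ℝ g y)
    (hg' : ∀ y ∈ Icc a b, DifferentiableAt ℝ (deriv g) y)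
    (hODE : ∀ y ∈ Icc a b, deriv (deriv g) y = h μ σ δ y (deriv g y))
    (h0 : deriv g a = 0) :
    ∀ y ∈ Icc a b, deriv g y ∈ Icc (-(M' μ σ δ)) (M' μ σ δ) := by
  set M : ℝ := M' μ σ δ with hMdef
  set f : ℝ → ℝ := deriv g with hf
  have hs : 0 < σ^2 := hμ.trans hμσ
  have hMge : 8 + (4*μ + 2*σ^2)/δ ≤ M := le_max_of_le_right (le_max_right _ _)
  have hMpos : 0 < M := by
    have : (0:ℝ) < (4*μ + 2*σ^2)/δ := by positivity
    linarith
  -- key sign facts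
  have hsign : ∀ y : ℝ, h μ σ δ y M < 0 ∧ 0 < h μ σ δ y (-M) :=
    fun y => h_sign μ σ δ hμ hμσ hδ y M hMge
  by_contra hcon
  push_neg at hcon
  obtain ⟨y₀, hy₀, hy₀M⟩ := hcon
  have hy₀M' : M < |f y₀| := by
    rcases abs_cases (f y₀) with ⟨h1, h2⟩ | ⟨h1, h2⟩
    · rw [h1]
      by_contra hle
      push_neg at hle
      exact hy₀M ⟨by linarith, hle⟩
    · rw [h1]
      by_contra hle
      push_neg at hle
      exact hy₀M ⟨by linarith, by linarith⟩
  -- the bad set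
  set B : Set ℝ := Icc a b ∩ f ⁻¹' {z : ℝ | M ≤ |z|} with hB
  have hcontf : ContinuousOn f (Icc a b) :=
    fun y hy => ((hg' y hy).continuousAt).continuousWithinAt
  have hBclosed : IsClosed B := by
    apply hcontf.preimage_isClosed_of_isClosed isClosed_Icc
    have : {z : ℝ | M ≤ |z|} = (fun z => |z|) ⁻¹' Ici M := rfl
    rw [this]
    exact isClosed_Ici.preimage continuous_abs
  have hBne : B.Nonempty := ⟨y₀, hy₀, hy₀M'.le⟩
  have hBbdd : BddBelow B := ⟨a, fun x hx => hx.1.1⟩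
  set c : ℝ := sInf B with hc
  have hcB : c ∈ B := hBclosed.csInf_mem hBne hBbdd
  have hcab : c ∈ Icc a b := hcB.1
  have hfc : M ≤ |f c| := hcB.2
  have hac : a < c := by
    rcases lt_or_eq_of_le hcab.1 with h | h
    · exact h
    · exfalso
      rw [← h] at hfc
      rw [h0] at hfc
      simp at hfc
      linarith
  -- for y in [a, c), |f y| < M
  have hbefore : ∀ y, a ≤ y → y < c → |f y| < M := by
    intro y hay hyc
    by_contra hle
    push_neg at hle
    have : y ∈ B := ⟨⟨hay, le_trans hyc.le hcab.2⟩, hle⟩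
    exact absurd (csInf_le hBbdd this) (not_le.mpr hyc)
  -- |f c| ≤ M by left continuity
  have hfcM : |f c| = M := by
    refine le_antisymm ?_ hfc
    have hcont : ContinuousAt f c := (hg' c hcab).continuousAt
    have htend : Filter.Tendsto (fun y => |f y|) (nhdsWithin c (Iio c)) (nhds (|f c|)) :=
      ((continuous_abs.continuousAt.comp hcont).tendsto).mono_left nhdsWithin_le_nhds
    refine le_of_tendsto htend ?_
    filter_upwards [Ioo_mem_nhdsLT_of_mem ⟨hac, le_refl c⟩] with y hy
    exact (hbefore y hy.1.le hy.2).le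
  -- derivative of f at c
  have hderiv : HasDerivAt f (h μ σ δ c (f c)) c := by
    have := (hg' c hcab).hasDerivAt
    rwa [hODE c hcab] at this
  -- slope tendsto
  have hslope := hasDerivAt_iff_tendsto_slope.mp hderiv
  rcases abs_eq (le_of_lt hMpos) |>.mp hfcM with hfcM' | hfcM'
  · -- f c = M, derivative negative
    have hL : h μ σ δ c (f c) < 0 := by rw [hfcM']; exact (hsign c).1
    have hev : ∀ᶠ y in nhdsWithin c (Iio c), slope f c y < 0 := by
      have h1 : ∀ᶠ y in nhdsWithin c {c}ᶜ, slope f c y < 0 :=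
        hslope.eventually (Iio_mem_nhds hL)
      exact h1.filter_mono (nhdsWithin_mono c (fun x hx => ne_of_lt hx))
    have hev2 : ∀ᶠ y in nhdsWithin c (Iio c), y ∈ Ioo a c :=
      Ioo_mem_nhdsLT_of_mem ⟨hac, le_refl c⟩
    obtain ⟨y, hy1, hy2⟩ := (hev.and hev2).exists
    have hyc : y - c < 0 := by linarith [hy2.2]
    have : f y - f c > 0 := by
      have := hy1
      rw [slope_def_field, div_lt_iff_of_neg hyc] at this
      simpa using by linarith [this]
    have : f y > M := by rw [← hfcM']; linarith
    have := hbefore y hy2.1.le hy2.2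
    rcases abs_lt.mp this with ⟨_, h2⟩
    linarith
  · -- f c = -M, derivative positive
    have hL : 0 < h μ σ δ c (f c) := by rw [hfcM']; exact (hsign c).2
    have hev : ∀ᶠ y in nhdsWithin c (Iio c), 0 < slope f c y := by
      have h1 : ∀ᶠ y in nhdsWithin c {c}ᶜ, 0 < slope f c y :=
        hslope.eventually (Ioi_mem_nhds hL)
      exact h1.filter_mono (nhdsWithin_mono c (fun x hx => ne_of_lt hx))
    have hev2 : ∀ᶠ y in nhdsWithin c (Iio c), y ∈ Ioo a c :=
      Ioo_mem_nhdsLT_of_mem ⟨hac, le_refl c⟩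
    obtain ⟨y, hy1, hy2⟩ := (hev.and hev2).exists
    have hyc : y - c < 0 := by linarith [hy2.2]
    have : f y - f c < 0 := by
      rw [slope_def_field, lt_div_iff_of_neg hyc] at hy1
      linarith [hy1]
    have : f y < -M := by rw [← hfcM']; linarith
    have := hbefore y hy2.1.le hy2.2
    rcases abs_lt.mp this with ⟨h1, _⟩
    linarith
end

section
/- For every Δ > 0 there exists a function g : ℝ → ℝ that is twice continuously differentiable on [y₀ − Δ, ∞), satisfies g(y₀ − Δ) = C̄, g'(y₀ − Δ) = 0, g''(y) = h(y, g'(y)) for all y ≥ y₀ − Δ, and g'(y) ∈ [−M', M'] for all y ≥ y₀ − Δ. In particular, the solution of this initial value problem does not explode in finite time. -/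
open Real Set

/-- The zero of the constant coefficient of the ODE. -/
noncomputable def y0 (μ σ : ℝ) : ℝ := -Real.log (σ^2/μ - 1)


open Filter Topology

lemma barrier' (μ s δ K q B : ℝ) (hμ : 0 < μ) (hμσ : μ < s) (hδ : 0 < δ)
    (hK8 : 8 ≤ K) (hKd : 8*δ + 4*μ + 2*s ≤ δ*K) (hq0 : 0 < q) (hq2 : q ≤ 2)
    (hB : 2*δ ≤ B) :
    ((-(2*μ)/s + q) + ((4*μ)/s - q - 1 - B/s)*K + (-(2*μ)/s + 1 + 2*(B/s))*K^2 - (B/s)*K^3 < 0)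
    ∧ (0 < (-(2*μ)/s + q) + ((4*μ)/s - q - 1 - B/s)*(-K) + (-(2*μ)/s + 1 + 2*(B/s))*(-K)^2 - (B/s)*(-K)^3) := by
  have hs : (0:ℝ) < s := hμ.trans hμσ
  have hs0 : s ≠ 0 := ne_of_gt hs
  have hK0 : (0:ℝ) < K := by linarith
  have e1 : s * ((-(2*μ)/s + q) + ((4*μ)/s - q - 1 - B/s)*K + (-(2*μ)/s + 1 + 2*(B/s))*K^2 - (B/s)*K^3)
      = (-(2*μ) + q*s) + (4*μ - q*s - s - B)*K + (s - 2*μ + 2*B)*K^2 - B*K^3 := by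
    field_simp; ring
  have e2 : s * ((-(2*μ)/s + q) + ((4*μ)/s - q - 1 - B/s)*(-K) + (-(2*μ)/s + 1 + 2*(B/s))*(-K)^2 - (B/s)*(-K)^3)
      = (-(2*μ) + q*s) - (4*μ - q*s - s - B)*K + (s - 2*μ + 2*B)*K^2 + B*K^3 := by
    field_simp; ring
  constructor
  · have h1 : (-(2*μ) + q*s) + (4*μ - q*s - s - B)*K + (s - 2*μ + 2*B)*K^2 - B*K^3 < 0 := by
      nlinarith [mul_le_mul_of_nonneg_right hB (by positivity : (0:ℝ) ≤ K*(K-1)^2),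
        mul_nonneg (mul_nonneg hq0.le hs.le) hK0.le,
        mul_le_mul_of_nonneg_right hKd (by positivity : (0:ℝ) ≤ K^2),
        mul_le_mul_of_nonneg_right hKd (by positivity : (0:ℝ) ≤ K),
        mul_nonneg (mul_nonneg hδ.le hK0.le) (sq_nonneg (K-8)),
        mul_pos hs hK0, mul_pos (mul_pos hs hK0) hK0]
    nlinarith [e1, h1]
  · have h2 : 0 < (-(2*μ) + q*s) - (4*μ - q*s - s - B)*K + (s - 2*μ + 2*B)*K^2 + B*K^3 := by
      nlinarith [mul_le_mul_of_nonneg_right hB (by positivity : (0:ℝ) ≤ K*(K+1)^2),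
        mul_nonneg (mul_nonneg hq0.le hs.le) hK0.le,
        mul_le_mul_of_nonneg_right hKd (by positivity : (0:ℝ) ≤ K^2),
        mul_le_mul_of_nonneg_right hKd (by positivity : (0:ℝ) ≤ K),
        mul_pos hs hK0, mul_pos (mul_pos hs hK0) hK0]
    nlinarith [e2, h2]

lemma hrep (μ σ δ t z : ℝ) (hs0 : σ^2 ≠ 0) : h μ σ δ t z =
    (-(2*μ)/σ^2 + (2/(1+exp (-t)))) + ((4*μ)/σ^2 - (2/(1+exp (-t))) - 1 - (2*δ*(1+exp t))/σ^2)*z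
    + (-(2*μ)/σ^2 + 1 + 2*((2*δ*(1+exp t))/σ^2))*z^2 - ((2*δ*(1+exp t))/σ^2)*z^3 := by
  unfold h; ring

lemma Mfacts (μ σ δ : ℝ) (hμ : 0 < μ) (hμσ : μ < σ^2) (hδ : 0 < δ) :
    8 ≤ M' μ σ δ ∧ 8*δ + 4*μ + 2*σ^2 ≤ δ * M' μ σ δ := by
  have hs : (0:ℝ) < σ^2 := hμ.trans hμσ
  have h3 : 8 + (4*μ + 2*σ^2)/δ ≤ M' μ σ δ := le_max_of_le_right (le_max_right _ _)
  have hd : 0 ≤ (4*μ + 2*σ^2)/δ := by positivity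
  constructor
  · linarith
  · have : 8*δ + 4*μ + 2*σ^2 = δ * (8 + (4*μ + 2*σ^2)/δ) := by field_simp; ring
    rw [this]
    exact mul_le_mul_of_nonneg_left h3 hδ.le

lemma invariance (μ σ δ K a c : ℝ)
    (hbt : ∀ t, h μ σ δ t K < 0) (hbb : ∀ t, 0 < h μ σ δ t (-K)) (hK0 : 0 < K)
    (z : ℝ → ℝ) (hza : z a = 0)
    (hz : ∀ t ∈ Icc a c, HasDerivWithinAt z (h μ σ δ t (z t)) (Icc a c) t) :
    ∀ t ∈ Icc a c, z t ∈ Ioo (-K) K := by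
  by_contra hcon
  push_neg at hcon
  obtain ⟨t₁, ht₁, ht₁'⟩ := hcon
  have hzc : ContinuousOn z (Icc a c) := fun t ht => (hz t ht).continuousWithinAt
  set S : Set ℝ := Icc a c ∩ (fun t => |z t|) ⁻¹' (Ici K) with hS
  have hSne : S.Nonempty := by
    refine ⟨t₁, ht₁, ?_⟩
    simp only [mem_preimage, mem_Ici, le_abs]
    rw [mem_Ioo, not_and_or, not_lt, not_lt] at ht₁'
    rcases ht₁' with h1 | h1
    · exact Or.inr (by linarith)
    · exact Or.inl (by linarith)
  have hScl : IsClosed S :=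
    ContinuousOn.preimage_isClosed_of_isClosed (hzc.abs) isClosed_Icc isClosed_Ici
  have hSbd : BddBelow S := ⟨a, fun t ht => ht.1.1⟩
  set τ := sInf S with hτ
  have hτS : τ ∈ S := hScl.csInf_mem hSne hSbd
  have hτIcc : τ ∈ Icc a c := hτS.1
  have hτabs : K ≤ |z τ| := hτS.2
  have haτ : a < τ := by
    rcases eq_or_lt_of_le hτIcc.1 with he | hl
    · rw [← he, hza, abs_zero] at hτabs; linarith
    · exact hl
  -- for t in [a, τ), |z t| < K
  have hlt : ∀ t ∈ Ico a τ, -K < z t ∧ z t < K := by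
    intro t ht
    have htn : t ∉ S := fun hmem => absurd (csInf_le hSbd hmem) (not_le.mpr ht.2)
    have htIcc : t ∈ Icc a c := ⟨ht.1, le_trans ht.2.le hτIcc.2⟩
    have : ¬ K ≤ |z t| := fun habs => htn ⟨htIcc, habs⟩
    rw [not_le, abs_lt] at this
    exact this
  -- the filter from the left is nontrivial
  have hfeq : 𝓝[Ico a τ] τ = 𝓝[Iio τ] τ := nhdsWithin_Ico_eq_nhdsLT haτ
  have hfne : (𝓝[Ico a τ] τ).NeBot := by rw [hfeq]; infer_instance
  -- z τ ∈ [-K, K]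
  have hsub : Ico a τ ⊆ Icc a c := fun t ht => ⟨ht.1, le_trans ht.2.le hτIcc.2⟩
  have hzτt : Tendsto z (𝓝[Ico a τ] τ) (𝓝 (z τ)) :=
    (hzc τ hτIcc).mono hsub
  have hzτK : z τ ≤ K :=
    le_of_tendsto hzτt (eventually_mem_nhdsWithin.mono fun t ht => (hlt t ht).2.le)
  have hzτK' : -K ≤ z τ :=
    ge_of_tendsto hzτt (eventually_mem_nhdsWithin.mono fun t ht => (hlt t ht).1.le)
  -- slope tendsto
  have hslope : Tendsto (slope z τ) (𝓝[Ico a τ] τ) (𝓝 (h μ σ δ τ (z τ))) := by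
    have := (hasDerivWithinAt_iff_tendsto_slope).mp (hz τ hτIcc)
    exact this.mono_left (nhdsWithin_mono τ (fun t ht => ⟨hsub ht, ne_of_lt ht.2⟩))
  rcases le_abs.mp hτabs with hcase | hcase
  · -- z τ = K
    have hzτ : z τ = K := le_antisymm hzτK hcase
    have hd : h μ σ δ τ (z τ) < 0 := hzτ ▸ hbt τ
    have hev : ∀ᶠ t in 𝓝[Ico a τ] τ, slope z τ t < 0 :=
      hslope.eventually (eventually_lt_nhds hd)
    obtain ⟨t, hts, htm⟩ := (hev.and eventually_mem_nhdsWithin).exists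
    rw [slope_def_field] at hts
    have hden : t - τ < 0 := sub_neg.mpr htm.2
    rcases div_neg_iff.mp hts with ⟨h1, h2⟩ | ⟨h1, h2⟩
    · have := (hlt t htm).2; linarith
    · linarith
  · -- z τ = -K
    have hzτ : z τ = -K := le_antisymm (by linarith) hzτK'
    have hd : 0 < h μ σ δ τ (z τ) := hzτ ▸ hbb τ
    have hev : ∀ᶠ t in 𝓝[Ico a τ] τ, 0 < slope z τ t :=
      hslope.eventually (eventually_gt_nhds hd)
    obtain ⟨t, hts, htm⟩ := (hev.and eventually_mem_nhdsWithin).exists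
    rw [slope_def_field] at hts
    have hden : t - τ < 0 := sub_neg.mpr htm.2
    rcases div_pos_iff.mp hts with ⟨h1, h2⟩ | ⟨h1, h2⟩
    · linarith
    · have := (hlt t htm).1; linarith

noncomputable def AA (σ δ b : ℝ) : ℝ := (2*δ/σ^2)*(1 + exp b)
noncomputable def CC (μ σ δ b K : ℝ) : ℝ :=
  (2*μ/σ^2 + 2) + (2*(2*μ/σ^2) + 3 + AA σ δ b)*(K+1) + (2*μ/σ^2 + 1 + 2*AA σ δ b)*(K+1)^2
    + AA σ δ b*(K+1)^3
noncomputable def LL (μ σ δ b K : ℝ) : ℝ :=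
  (2*(2*μ/σ^2) + 3 + AA σ δ b) + (2*μ/σ^2 + 1 + 2*AA σ δ b)*(2*(K+1)) + AA σ δ b*(3*(K+1)^2)

lemma cubic_bound (m q A Am K x : ℝ) (hm : 0 ≤ m) (hq0 : 0 < q) (hq2 : q ≤ 2)
    (hA0 : 0 ≤ A) (hA1 : A ≤ Am) (hK : 0 ≤ K) (hx : |x| ≤ K + 1) :
    |(-m + q) + (2*m - q - 1 - A)*x + (-m + 1 + 2*A)*x^2 - A*x^3|
      ≤ (m+2) + (2*m+3+Am)*(K+1) + (m+1+2*Am)*(K+1)^2 + Am*(K+1)^3 := by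
  have hx0 : (0:ℝ) ≤ |x| := abs_nonneg _
  have tri : |(-m + q) + (2*m - q - 1 - A)*x + (-m + 1 + 2*A)*x^2 - A*x^3|
      ≤ |(-m + q)| + |(2*m - q - 1 - A)*x| + |(-m + 1 + 2*A)*x^2| + |A*x^3| :=
    (abs_sub _ _).trans (by gcongr; exact abs_add_three _ _ _)
  refine tri.trans ?_
  have b0 : |(-m + q)| ≤ m + 2 := abs_le.mpr ⟨by linarith, by linarith⟩
  have b1 : |(2*m - q - 1 - A)| ≤ 2*m + 3 + Am := abs_le.mpr ⟨by linarith, by linarith⟩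
  have b2 : |(-m + 1 + 2*A)| ≤ m + 1 + 2*Am := abs_le.mpr ⟨by linarith, by linarith⟩
  have b3 : |A| ≤ Am := abs_le.mpr ⟨by linarith, by linarith⟩
  rw [abs_mul, abs_mul, abs_mul, abs_pow, abs_pow]
  have hx2 : |x|^2 ≤ (K+1)^2 := by gcongr
  have hx3 : |x|^3 ≤ (K+1)^3 := by gcongr
  gcongr <;> first | assumption | positivity | linarith

lemma cubic_lip (m q A Am K x y : ℝ) (hm : 0 ≤ m) (hq0 : 0 < q) (hq2 : q ≤ 2)
    (hA0 : 0 ≤ A) (hA1 : A ≤ Am) (hK : 0 ≤ K) (hx : |x| ≤ K + 1) (hy : |y| ≤ K + 1) :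
    |((2*m - q - 1 - A) + (-m + 1 + 2*A)*(x+y) - A*(x^2+x*y+y^2))|
      ≤ (2*m+3+Am) + (m+1+2*Am)*(2*(K+1)) + Am*(3*(K+1)^2) := by
  have hx0 : (0:ℝ) ≤ |x| := abs_nonneg _
  have hy0 : (0:ℝ) ≤ |y| := abs_nonneg _
  have tri : |((2*m - q - 1 - A) + (-m + 1 + 2*A)*(x+y) - A*(x^2+x*y+y^2))|
      ≤ |(2*m - q - 1 - A)| + |(-m + 1 + 2*A)*(x+y)| + |A*(x^2+x*y+y^2)| :=
    (abs_sub _ _).trans (by gcongr; exact abs_add_le _ _)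
  refine tri.trans ?_
  have b1 : |(2*m - q - 1 - A)| ≤ 2*m + 3 + Am := abs_le.mpr ⟨by linarith, by linarith⟩
  have b2 : |(-m + 1 + 2*A)| ≤ m + 1 + 2*Am := abs_le.mpr ⟨by linarith, by linarith⟩
  have b3 : |A| ≤ Am := abs_le.mpr ⟨by linarith, by linarith⟩
  have bxy : |x + y| ≤ 2*(K+1) := (abs_add_le _ _).trans (by linarith)
  have bsq : |x^2 + x*y + y^2| ≤ 3*(K+1)^2 := by
    have h1 : |x^2 + x*y + y^2| ≤ |x|^2 + |x| * |y| + |y|^2 := by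
      calc |x^2 + x*y + y^2| ≤ |x^2 + x*y| + |y^2| := abs_add_le _ _
        _ ≤ (|x^2| + |x*y|) + |y^2| := by gcongr; exact abs_add_le _ _
        _ = |x|^2 + |x| * |y| + |y|^2 := by rw [abs_mul, abs_pow, abs_pow]
    refine h1.trans ?_
    nlinarith
  rw [abs_mul, abs_mul]
  gcongr <;> first | assumption | positivity | linarith

section
variable {μ σ δ b K : ℝ} (hμ : 0 < μ) (hμσ : μ < σ^2) (hδ : 0 < δ) (hK : 0 ≤ K)

include hμ hμσ hδ in
lemma coef_facts {t : ℝ} (ht : t ≤ b) :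
    0 < 2/(1 + exp (-t)) ∧ 2/(1 + exp (-t)) ≤ 2 ∧ 0 ≤ (2*δ/σ^2)*(1 + exp t) ∧
      (2*δ/σ^2)*(1 + exp t) ≤ AA σ δ b ∧ 0 ≤ AA σ δ b ∧ 0 ≤ 2*μ/σ^2 := by
  have hs : (0:ℝ) < σ^2 := hμ.trans hμσ
  have h1 : (0:ℝ) < exp (-t) := exp_pos _
  have h2 : exp t ≤ exp b := exp_le_exp.mpr ht
  have h3 : (0:ℝ) < exp t := exp_pos _
  have h4 : (0:ℝ) < exp b := exp_pos _
  have hd0 : (0:ℝ) ≤ 2*δ/σ^2 := div_nonneg (by linarith) (sq_nonneg σ)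
  refine ⟨by positivity, ?_, mul_nonneg hd0 (by positivity),
    ?_, mul_nonneg hd0 (by positivity), by positivity⟩
  · rw [div_le_iff₀ (by positivity)]; nlinarith
  · unfold AA; nlinarith

include hμ hμσ hδ hK in
lemma CC_pos : 0 < CC μ σ δ b K := by
  obtain ⟨_, _, _, _, h3, h1⟩ := coef_facts hμ hμσ hδ (b := b) (le_refl b)
  have h4 : (0:ℝ) ≤ K + 1 := by linarith
  unfold CC
  nlinarith [mul_nonneg (by linarith : (0:ℝ) ≤ 2*(2*μ/σ^2) + 3 + AA σ δ b) h4,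
    mul_nonneg (mul_nonneg (by linarith : (0:ℝ) ≤ 2*μ/σ^2 + 1 + 2*AA σ δ b) h4) h4,
    mul_nonneg (mul_nonneg (mul_nonneg h3 h4) h4) h4]

include hμ hμσ hδ hK in
lemma LL_nonneg : 0 ≤ LL μ σ δ b K := by
  obtain ⟨_, _, _, _, h3, h1⟩ := coef_facts hμ hμσ hδ (b := b) (le_refl b)
  have h4 : (0:ℝ) ≤ K + 1 := by linarith
  unfold LL
  nlinarith [mul_nonneg (by linarith : (0:ℝ) ≤ 2*μ/σ^2 + 1 + 2*AA σ δ b)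
      (by nlinarith : (0:ℝ) ≤ 2*(K+1)),
    mul_nonneg h3 (by nlinarith : (0:ℝ) ≤ 3*(K+1)^2)]

include hμ hμσ hδ hK in
lemma norm_bound {t x : ℝ} (ht : t ≤ b) (hx : |x| ≤ K + 1) :
    |h μ σ δ t x| ≤ CC μ σ δ b K := by
  obtain ⟨hq0, hq2, hA0, hA1, hAm, hms⟩ := coef_facts hμ hμσ hδ (b := b) ht
  have e : h μ σ δ t x = (-(2*μ/σ^2) + 2/(1 + exp (-t)))
      + (2*(2*μ/σ^2) - 2/(1 + exp (-t)) - 1 - (2*δ/σ^2)*(1 + exp t))*x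
      + (-(2*μ/σ^2) + 1 + 2*((2*δ/σ^2)*(1 + exp t)))*x^2
      - ((2*δ/σ^2)*(1 + exp t))*x^3 := by unfold h; ring
  rw [e]
  exact cubic_bound (2*μ/σ^2) _ _ (AA σ δ b) K x hms hq0 hq2 hA0 hA1 hK hx

include hμ hμσ hδ hK in
lemma lip_bound {t : ℝ} (ht : t ≤ b) :
    LipschitzOnWith (Real.toNNReal (LL μ σ δ b K)) (fun x => h μ σ δ t x)
      (Icc (-(K+1)) (K+1)) := by
  obtain ⟨hq0, hq2, hA0, hA1, hAm, hms⟩ := coef_facts hμ hμσ hδ (b := b) ht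
  rw [lipschitzOnWith_iff_dist_le_mul]
  intro x hx y hy
  rw [Real.dist_eq, Real.dist_eq, Real.coe_toNNReal _ (LL_nonneg hμ hμσ hδ hK)]
  have hxK : |x| ≤ K + 1 := abs_le.mpr ⟨hx.1, hx.2⟩
  have hyK : |y| ≤ K + 1 := abs_le.mpr ⟨hy.1, hy.2⟩
  have e : h μ σ δ t x - h μ σ δ t y =
      ((2*(2*μ/σ^2) - 2/(1 + exp (-t)) - 1 - (2*δ/σ^2)*(1 + exp t))
       + (-(2*μ/σ^2) + 1 + 2*((2*δ/σ^2)*(1 + exp t)))*(x+y)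
       - ((2*δ/σ^2)*(1 + exp t))*(x^2+x*y+y^2)) * (x - y) := by
    unfold h; ring
  show |h μ σ δ t x - h μ σ δ t y| ≤ _
  rw [e, abs_mul]
  exact mul_le_mul_of_nonneg_right
    (cubic_lip (2*μ/σ^2) _ _ (AA σ δ b) K x y hms hq0 hq2 hA0 hA1 hK hxK hyK)
    (abs_nonneg _)

end

lemma h_cont_t (μ σ δ x : ℝ) : Continuous fun t => h μ σ δ t x := by
  have hden : ∀ t : ℝ, (1 + exp (-t)) ≠ 0 := fun t => by positivity
  unfold h
  have c1 : Continuous fun t : ℝ => 2/(1 + exp (-t)) :=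
    continuous_const.div (continuous_const.add (continuous_neg.rexp)) hden
  have c2 : Continuous fun t : ℝ => 1 + exp t := continuous_const.add continuous_exp
  fun_prop (disch := assumption)


lemma h_contZ (μ σ δ : ℝ) {Z : ℝ → ℝ} {S : Set ℝ} (hZcont : ContinuousOn Z S) :
    ContinuousOn (fun y => h μ σ δ y (Z y)) S := by
  have hden : ∀ t : ℝ, (1 + exp (-t)) ≠ 0 := fun t => by positivity
  have c1 : ContinuousOn (fun y : ℝ => 2/(1 + exp (-y))) S := by
    apply ContinuousOn.div continuousOn_const
    · fun_prop
    · exact fun y _ => hden y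
  unfold h
  fun_prop

section Main

variable {μ σ δ : ℝ}

lemma barrier_h (hμ : 0 < μ) (hμσ : μ < σ^2) (hδ : 0 < δ) {K : ℝ}
    (hK8 : 8 ≤ K) (hKd : 8*δ + 4*μ + 2*σ^2 ≤ δ*K) (t : ℝ) :
    h μ σ δ t K < 0 ∧ 0 < h μ σ δ t (-K) := by
  have hs : (0:ℝ) < σ^2 := hμ.trans hμσ
  obtain ⟨hq0, hq2, hA0, hA1, hAm, hms⟩ := coef_facts hμ hμσ hδ (b := t) (le_refl t)
  have hB : 2*δ ≤ 2*δ*(1 + exp t) := by nlinarith [exp_pos t]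
  have e1 := hrep μ σ δ t K (ne_of_gt hs)
  have e2 := hrep μ σ δ t (-K) (ne_of_gt hs)
  obtain ⟨H1, H2⟩ := barrier' μ (σ^2) δ K (2/(1+exp (-t))) (2*δ*(1+exp t))
    hμ hμσ hδ hK8 hKd hq0 hq2 hB
  rw [e1, e2]
  exact ⟨H1, H2⟩

/-- The local Picard–Lindelöf step with uniform step size. -/
lemma picard_step (hμ : 0 < μ) (hμσ : μ < σ^2) (hδ : 0 < δ) {K b : ℝ} (hK : 0 ≤ K)
    {c x₀ : ℝ} (hcb : c ≤ b) (hx₀ : x₀ ∈ Icc (-K) K) :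
    ∃ w : ℝ → ℝ, w c = x₀ ∧ ∀ t ∈ Icc c (c + min 1 (1/(CC μ σ δ (b+1) K + 1))),
      HasDerivWithinAt w (h μ σ δ t (w t)) (Icc c (c + min 1 (1/(CC μ σ δ (b+1) K + 1)))) t := by
  set C := CC μ σ δ (b+1) K with hC
  have hC0 : 0 < C := CC_pos hμ hμσ hδ hK
  set ε := min 1 (1/(C + 1)) with hε
  have hε0 : 0 < ε := lt_min one_pos (by positivity)
  have hball : Metric.closedBall x₀ 1 ⊆ Icc (-(K+1)) (K+1) := by
    rw [Real.closedBall_eq_Icc]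
    exact Icc_subset_Icc (by linarith [hx₀.1]) (by linarith [hx₀.2])
  have hple : IsPicardLindelof (fun t x => h μ σ δ t x) (tmin := c) (tmax := c + ε)
      ⟨c, left_mem_Icc.mpr (by linarith)⟩ x₀ 1 0 (Real.toNNReal C)
      (Real.toNNReal (LL μ σ δ (b+1) K)) := by
    refine ⟨?_, ?_, ?_, ?_⟩
    · intro t ht
      have htb : t ≤ b + 1 := le_trans ht.2 (by have := min_le_left (1:ℝ) (1/(C+1)); linarith)
      exact (lip_bound hμ hμσ hδ hK htb).mono hball
    · intro x _
      exact (h_cont_t μ σ δ x).continuousOn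
    · intro t ht x hx
      have htb : t ≤ b + 1 := le_trans ht.2 (by have := min_le_left (1:ℝ) (1/(C+1)); linarith)
      have hxK : |x| ≤ K + 1 := by
        have := hball hx
        exact abs_le.mpr ⟨this.1, this.2⟩
      rw [Real.norm_eq_abs, Real.coe_toNNReal _ hC0.le]
      exact norm_bound hμ hμσ hδ hK htb hxK
    · have : max (c + ε - c) (c - c) = ε := by
        rw [add_sub_cancel_left, sub_self, max_eq_left hε0.le]
      rw [this]
      have h1 : ε ≤ 1/(C+1) := min_le_right _ _
      have h2 : C * ε ≤ C * (1/(C+1)) := mul_le_mul_of_nonneg_left h1 hC0.le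
      have h3 : C * (1/(C+1)) ≤ 1 := by
        rw [mul_one_div, div_le_one (by linarith)]; linarith
      rw [Real.coe_toNNReal _ hC0.le, NNReal.coe_one, NNReal.coe_zero]
      linarith
  obtain ⟨w, hw0, hw⟩ := hple.exists_eq_forall_mem_Icc_hasDerivWithinAt₀
  exact ⟨w, hw0, hw⟩

/-- Existence of a solution on `[a, b]` staying in `(-K, K)`. -/
lemma exists_sol_Icc (hμ : 0 < μ) (hμσ : μ < σ^2) (hδ : 0 < δ) {K a b : ℝ}
    (hK8 : 8 ≤ K) (hKd : 8*δ + 4*μ + 2*σ^2 ≤ δ*K) (hab : a ≤ b) :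
    ∃ z : ℝ → ℝ, z a = 0 ∧
      ∀ t ∈ Icc a b, HasDerivWithinAt z (h μ σ δ t (z t)) (Icc a b) t := by
  have hK0 : (0:ℝ) ≤ K := by linarith
  set C := CC μ σ δ (b+1) K with hC
  have hC0 : 0 < C := CC_pos hμ hμσ hδ hK0
  set ε := min 1 (1/(C + 1)) with hε
  have hε0 : 0 < ε := lt_min one_pos (by positivity)
  have hbar := barrier_h hμ hμσ hδ hK8 hKd
  -- induction on the number of steps
  have main : ∀ n : ℕ, ∃ z : ℝ → ℝ, z a = 0 ∧
      ∀ t ∈ Icc a (min b (a + n*ε)),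
        HasDerivWithinAt z (h μ σ δ t (z t)) (Icc a (min b (a + n*ε))) t := by
    intro n
    induction n with
    | zero =>
      refine ⟨fun _ => 0, rfl, ?_⟩
      have : min b (a + (0:ℕ)*ε) = a := by
        simp only [Nat.cast_zero, zero_mul, add_zero]
        exact min_eq_right hab
      rw [this]
      intro t ht
      rw [Icc_self] at ht ⊢
      rw [mem_singleton_iff] at ht
      subst ht
      rw [hasDerivWithinAt_iff_tendsto_slope, diff_self, nhdsWithin_empty]
      exact tendsto_bot
    | succ n ih =>
      obtain ⟨z, hza, hz⟩ := ih
      set c := min b (a + n*ε) with hc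
      set c' := min b (a + (n+1 : ℕ)*ε) with hc'
      have hK0 : (0:ℝ) ≤ K := by linarith
      have hnε : (0:ℝ) ≤ n*ε := mul_nonneg (Nat.cast_nonneg n) hε0.le
      have hac : a ≤ c := le_min hab (by linarith)
      have hcb : c ≤ b := min_le_left _ _
      have hcc' : c ≤ c' := by
        have h1 : (n:ℝ)*ε ≤ ((n+1:ℕ):ℝ)*ε := by push_cast; nlinarith
        exact le_min hcb (le_trans (min_le_right _ _) (by linarith))
      have hac' : a ≤ c' := le_trans hac hcc'
      have hc'ε : c' ≤ c + ε := by
        rcases le_total b (a + n*ε) with hbc | hbc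
        · have he1 : c = b := min_eq_left hbc
          have he2 : c' ≤ b := min_le_left _ _
          linarith
        · have he1 : c = a + n*ε := min_eq_right hbc
          have he2 : c' ≤ a + ((n+1:ℕ):ℝ)*ε := min_le_right _ _
          push_cast at he2
          linarith
      have hinv := invariance μ σ δ K a c (fun t => (hbar t).1) (fun t => (hbar t).2)
        (by linarith) z hza hz
      have hzc : z c ∈ Icc (-K) K := by
        have := hinv c (right_mem_Icc.mpr hac)
        exact ⟨this.1.le, this.2.le⟩
      obtain ⟨w, hwc, hw⟩ := picard_step hμ hμσ hδ hK0 hcb hzc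
      rw [← hε] at hw
      refine ⟨fun t => if t ≤ c then z t else w t, by simp only [if_pos hac, hza], ?_⟩
      have huz : ∀ x ∈ Icc a c, (fun t => if t ≤ c then z t else w t) x = z x :=
        fun x hx => if_pos hx.2
      have huw : ∀ x ∈ Icc c c', (fun t => if t ≤ c then z t else w t) x = w x := by
        intro x hx
        by_cases hxc : x ≤ c
        · have hxe : x = c := le_antisymm hxc hx.1
          subst hxe
          simp [hwc]
        · simp only [if_neg hxc]
      intro t ht
      rcases lt_trichotomy t c with htc | htc | htc
      · have htIcc : t ∈ Icc a c := ⟨ht.1, htc.le⟩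
        have hmem : Icc a c ∈ 𝓝[Icc a c'] t := by
          refine mem_of_superset
            (inter_mem (mem_nhdsWithin_of_mem_nhds (Iic_mem_nhds htc)) self_mem_nhdsWithin) ?_
          rintro x ⟨hx1, hx2⟩
          exact ⟨hx2.1, hx1⟩
        have hd := ((hz t htIcc).congr huz (huz t htIcc)).mono_of_mem_nhdsWithin hmem
        have hut : (fun t => if t ≤ c then z t else w t) t = z t := huz t htIcc
        rw [hut]
        exact hd
      · have htIcc : t ∈ Icc a c := ⟨ht.1, le_of_eq htc⟩
        have hdl := (hz t htIcc).congr huz (huz t htIcc)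
        have htIcc2 : t ∈ Icc c (c+ε) := ⟨htc.ge, by rw [htc]; linarith⟩
        have hdr := ((hw t htIcc2).mono (Icc_subset_Icc_right hc'ε)).congr huw
          (huw t ⟨htc.ge, htc.le.trans hcc'⟩)
        have hwt : w t = z t := by rw [htc, hwc]
        rw [hwt] at hdr
        have hun := hdl.union hdr
        rw [Icc_union_Icc_eq_Icc hac hcc'] at hun
        have hut : (fun s => if s ≤ c then z s else w s) t = z t := huz t htIcc
        rw [hut]
        exact hun
      · have htcc' : t ∈ Icc c c' := ⟨htc.le, ht.2⟩
        have hmem : Icc c c' ∈ 𝓝[Icc a c'] t := by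
          refine mem_of_superset
            (inter_mem (mem_nhdsWithin_of_mem_nhds (Ici_mem_nhds htc)) self_mem_nhdsWithin) ?_
          rintro x ⟨hx1, hx2⟩
          exact ⟨hx1, hx2.2⟩
        have htε : t ∈ Icc c (c+ε) := ⟨htc.le, le_trans ht.2 hc'ε⟩
        have hd := (((hw t htε).mono (Icc_subset_Icc_right hc'ε)).congr huw
          (huw t htcc')).mono_of_mem_nhdsWithin hmem
        have hut : (fun s => if s ≤ c then z s else w s) t = w t := huw t htcc'
        rw [hut]
        exact hd
  obtain ⟨n, hn⟩ := exists_nat_ge ((b - a)/ε)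
  obtain ⟨z, hza, hz⟩ := main n
  have : min b (a + n*ε) = b := by
    rw [min_eq_left]
    rw [div_le_iff₀ hε0] at hn
    linarith
  rw [this] at hz
  exact ⟨z, hza, hz⟩

/-- Symmetric local Picard step at `a` with initial value `0`. -/
lemma picard_sym (hμ : 0 < μ) (hμσ : μ < σ^2) (hδ : 0 < δ) {K a : ℝ} (hK : 0 ≤ K) :
    ∃ w : ℝ → ℝ, w a = 0 ∧ ∀ t ∈ Icc (a - min 1 (1/(CC μ σ δ (a+1) K + 1)))
        (a + min 1 (1/(CC μ σ δ (a+1) K + 1))),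
      HasDerivWithinAt w (h μ σ δ t (w t))
        (Icc (a - min 1 (1/(CC μ σ δ (a+1) K + 1))) (a + min 1 (1/(CC μ σ δ (a+1) K + 1)))) t := by
  set C := CC μ σ δ (a+1) K with hC
  have hC0 : 0 < C := CC_pos hμ hμσ hδ hK
  set ε := min 1 (1/(C + 1)) with hε
  have hε0 : 0 < ε := lt_min one_pos (by positivity)
  have hball : Metric.closedBall (0:ℝ) 1 ⊆ Icc (-(K+1)) (K+1) := by
    rw [Real.closedBall_eq_Icc]
    exact Icc_subset_Icc (by linarith) (by linarith)
  have hple : IsPicardLindelof (fun t x => h μ σ δ t x) (tmin := a - ε) (tmax := a + ε)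
      ⟨a, show a ∈ Icc (a - ε) (a + ε) from ⟨by linarith, by linarith⟩⟩ 0 1 0 (Real.toNNReal C)
      (Real.toNNReal (LL μ σ δ (a+1) K)) := by
    refine ⟨?_, ?_, ?_, ?_⟩
    · intro t ht
      have htb : t ≤ a + 1 := le_trans ht.2 (by have := min_le_left (1:ℝ) (1/(C+1)); linarith)
      exact (lip_bound hμ hμσ hδ hK htb).mono hball
    · intro x _
      exact (h_cont_t μ σ δ x).continuousOn
    · intro t ht x hx
      have htb : t ≤ a + 1 := le_trans ht.2 (by have := min_le_left (1:ℝ) (1/(C+1)); linarith)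
      have hxK : |x| ≤ K + 1 := by
        have := hball hx
        exact abs_le.mpr ⟨this.1, this.2⟩
      rw [Real.norm_eq_abs, Real.coe_toNNReal _ hC0.le]
      exact norm_bound hμ hμσ hδ hK htb hxK
    · have hm : max (a + ε - a) (a - (a - ε)) = ε := by
        rw [add_sub_cancel_left, sub_sub_cancel, max_self]
      rw [hm]
      have h1 : ε ≤ 1/(C+1) := min_le_right _ _
      have h2 : C * ε ≤ C * (1/(C+1)) := mul_le_mul_of_nonneg_left h1 hC0.le
      have h3 : C * (1/(C+1)) ≤ 1 := by
        rw [mul_one_div, div_le_one (by linarith)]; linarith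
      rw [Real.coe_toNNReal _ hC0.le, NNReal.coe_one, NNReal.coe_zero]
      linarith
  obtain ⟨w, hw0, hw⟩ := hple.exists_eq_forall_mem_Icc_hasDerivWithinAt₀
  exact ⟨w, hw0, hw⟩

/-- Uniqueness of solutions with initial value `0` at `a`. -/
lemma sol_unique (hμ : 0 < μ) (hμσ : μ < σ^2) (hδ : 0 < δ) {K a c₁ c₂ : ℝ}
    (hK8 : 8 ≤ K) (hKd : 8*δ + 4*μ + 2*σ^2 ≤ δ*K) (hac₁ : a ≤ c₁) (hac₂ : a ≤ c₂)
    {z₁ z₂ : ℝ → ℝ} (hz₁a : z₁ a = 0) (hz₂a : z₂ a = 0)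
    (hz₁ : ∀ t ∈ Icc a c₁, HasDerivWithinAt z₁ (h μ σ δ t (z₁ t)) (Icc a c₁) t)
    (hz₂ : ∀ t ∈ Icc a c₂, HasDerivWithinAt z₂ (h μ σ δ t (z₂ t)) (Icc a c₂) t) :
    EqOn z₁ z₂ (Icc a (min c₁ c₂)) := by
  have hK0 : (0:ℝ) ≤ K := by linarith
  set m := min c₁ c₂ with hm
  have ham : a ≤ m := le_min hac₁ hac₂
  have hbar := barrier_h hμ hμσ hδ hK8 hKd
  have hrestr : ∀ (c : ℝ) (z : ℝ → ℝ), m ≤ c →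
      (∀ t ∈ Icc a c, HasDerivWithinAt z (h μ σ δ t (z t)) (Icc a c) t) →
      ∀ t ∈ Icc a m, HasDerivWithinAt z (h μ σ δ t (z t)) (Icc a m) t :=
    fun c z hmc hz t ht =>
      (hz t ⟨ht.1, le_trans ht.2 hmc⟩).mono (Icc_subset_Icc_right hmc)
  have hz₁m := hrestr c₁ z₁ (min_le_left _ _) hz₁
  have hz₂m := hrestr c₂ z₂ (min_le_right _ _) hz₂
  have hinv₁ := invariance μ σ δ K a m (fun t => (hbar t).1) (fun t => (hbar t).2)
    (by linarith) z₁ hz₁a hz₁m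
  have hinv₂ := invariance μ σ δ K a m (fun t => (hbar t).1) (fun t => (hbar t).2)
    (by linarith) z₂ hz₂a hz₂m
  -- modified vector field, globally Lipschitz on the tube
  set v : ℝ → ℝ → ℝ := fun t x => h μ σ δ (min t m) x with hv
  have hlip : ∀ t, LipschitzOnWith (Real.toNNReal (LL μ σ δ (m+1) K)) (v t)
      (Icc (-(K+1)) (K+1)) := by
    intro t
    exact lip_bound hμ hμσ hδ hK0 (le_trans (min_le_right t m) (by linarith))
  have hIci : ∀ (z : ℝ → ℝ), (∀ t ∈ Icc a m, HasDerivWithinAt z (h μ σ δ t (z t)) (Icc a m) t) →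
      ∀ t ∈ Ico a m, HasDerivWithinAt z (v t (z t)) (Ici t) t := by
    intro z hz t ht
    have hmem : Icc a m ∈ 𝓝[Ici t] t := by
      refine mem_of_superset
        (inter_mem (mem_nhdsWithin_of_mem_nhds (Iic_mem_nhds ht.2)) self_mem_nhdsWithin) ?_
      rintro x ⟨hx1, hx2⟩
      exact ⟨le_trans ht.1 hx2, hx1⟩
    have hd := (hz t ⟨ht.1, ht.2.le⟩).mono_of_mem_nhdsWithin hmem
    have hveq : v t (z t) = h μ σ δ t (z t) := by rw [hv]; simp [min_eq_left ht.2.le]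
    rw [hveq]
    exact hd
  exact ODE_solution_unique_of_mem_Icc_right (fun t _ => hlip t)
    (fun t ht => (hz₁m t ht).continuousWithinAt) (hIci z₁ hz₁m)
    (fun t ht => ⟨by linarith [(hinv₁ t ⟨ht.1, ht.2.le⟩).1], by linarith [(hinv₁ t ⟨ht.1, ht.2.le⟩).2]⟩)
    (fun t ht => (hz₂m t ht).continuousWithinAt) (hIci z₂ hz₂m)
    (fun t ht => ⟨by linarith [(hinv₂ t ⟨ht.1, ht.2.le⟩).1], by linarith [(hinv₂ t ⟨ht.1, ht.2.le⟩).2]⟩)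
    (by rw [hz₁a, hz₂a])


end Main


lemma assemble (μ σ δ Cbar a K εa : ℝ) (hε : 0 < εa)
    (Z : ℝ → ℝ) (hZa : Z a = 0)
    (hZD : ∀ t, a - εa < t → HasDerivAt Z (h μ σ δ t (Z t)) t)
    (hZB : ∀ t, a ≤ t → Z t ∈ Icc (-K) K) :
    ∃ g : ℝ → ℝ,
      ContDiffOn ℝ 2 g (Ici a) ∧ g a = Cbar ∧ deriv g a = 0 ∧
      (∀ y, a ≤ y → deriv (deriv g) y = h μ σ δ y (deriv g y)) ∧
      (∀ y, a ≤ y → deriv g y ∈ Icc (-K) K) := by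
  set S : Set ℝ := Ioi (a - εa) with hSdef
  have hSopen : IsOpen S := isOpen_Ioi
  have haS : a ∈ S := mem_Ioi.mpr (by linarith)
  have hZcont : ContinuousOn Z S := fun t ht => (hZD t ht).continuousAt.continuousWithinAt
  obtain ⟨g, hgdef⟩ : ∃ g : ℝ → ℝ, g = fun y => Cbar + ∫ u in a..y, Z u := ⟨_, rfl⟩
  have hgD : ∀ y ∈ S, HasDerivAt g (Z y) y := by
    intro y hy
    have hsub : uIcc a y ⊆ S := by
      intro x hx
      rcases le_total a y with hc | hc
      · rw [uIcc_of_le hc] at hx; exact mem_Ioi.mpr (by linarith [hx.1])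
      · rw [uIcc_of_ge hc] at hx; exact mem_Ioi.mpr (lt_of_lt_of_le hy (hx.1))
    have hint : IntervalIntegrable Z MeasureTheory.volume a y :=
      (hZcont.mono hsub).intervalIntegrable
    have hmeas : StronglyMeasurableAtFilter Z (𝓝 y) :=
      hZcont.stronglyMeasurableAtFilter hSopen y hy
    have hFTC := intervalIntegral.integral_hasDerivAt_right hint hmeas
      (hZD y hy).continuousAt
    rw [hgdef]
    exact hFTC.const_add Cbar
  have hderiv_eq : ∀ y ∈ S, deriv g y = Z y := fun y hy => (hgD y hy).deriv
  have h2nd : ∀ y ∈ S, deriv (deriv g) y = h μ σ δ y (Z y) := by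
    intro y hy
    have hEq : deriv g =ᶠ[𝓝 y] Z := eventuallyEq_of_mem (hSopen.mem_nhds hy) hderiv_eq
    rw [hEq.deriv_eq]
    exact (hZD y hy).deriv
  have hIciS : Ici a ⊆ S := fun x hx => mem_Ioi.mpr (lt_of_lt_of_le (by linarith) hx)
  refine ⟨g, ?_, ?_, ?_, ?_, ?_⟩
  · refine ContDiffOn.mono (s := S) ?_ hIciS
    rw [show (2 : WithTop ℕ∞) = 1 + 1 from rfl, contDiffOn_succ_iff_deriv_of_isOpen hSopen]
    refine ⟨fun y hy => (hgD y hy).differentiableAt.differentiableWithinAt, by simp, ?_⟩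
    have hZC1 : ContDiffOn ℝ 1 Z S := by
      rw [show (1 : WithTop ℕ∞) = 0 + 1 from rfl, contDiffOn_succ_iff_deriv_of_isOpen hSopen]
      refine ⟨fun y hy => (hZD y hy).differentiableAt.differentiableWithinAt, by simp, ?_⟩
      rw [contDiffOn_zero]
      have hhc : ContinuousOn (fun y => h μ σ δ y (Z y)) S := h_contZ μ σ δ hZcont
      exact hhc.congr (fun y hy => (hZD y hy).deriv)
    exact hZC1.congr hderiv_eq
  · rw [hgdef]; simp
  · rw [hderiv_eq a haS, hZa]
  · intro y hy
    rw [h2nd y (hIciS hy), hderiv_eq y (hIciS hy)]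
  · intro y hy
    rw [hderiv_eq y (hIciS hy)]
    exact hZB y hy

/-- Global existence of the solution of the initial value problem: for every Δ > 0
there is a non-exploding solution on [y₀ - Δ, ∞) with bounded slope. -/
theorem IVP_global_existence
    (μ σ δ Cbar : ℝ) (hμ : 0 < μ) (hμσ : μ < σ^2) (hδ : 0 < δ) :
    ∀ Δ : ℝ, 0 < Δ →
      ∃ g : ℝ → ℝ,
        ContDiffOn ℝ 2 g (Ici (y0 μ σ - Δ)) ∧
        g (y0 μ σ - Δ) = Cbar ∧
        deriv g (y0 μ σ - Δ) = 0 ∧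
        (∀ y, y0 μ σ - Δ ≤ y → deriv (deriv g) y = h μ σ δ y (deriv g y)) ∧
        (∀ y, y0 μ σ - Δ ≤ y → deriv g y ∈ Icc (-(M' μ σ δ)) (M' μ σ δ)) := by
  intro Δ hΔ
  set a := y0 μ σ - Δ with ha
  set K := M' μ σ δ with hKdef
  obtain ⟨hK8, hKd⟩ := Mfacts μ σ δ hμ hμσ hδ
  have hK0 : (0:ℝ) ≤ K := by linarith
  have hbar := barrier_h hμ hμσ hδ hK8 hKd
  -- forward solutions on [a, a+n]
  have hsol : ∀ n : ℕ, ∃ z : ℝ → ℝ, z a = 0 ∧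
      ∀ t ∈ Icc a (a + n), HasDerivWithinAt z (h μ σ δ t (z t)) (Icc a (a + n)) t :=
    fun n => exists_sol_Icc hμ hμσ hδ hK8 hKd
      (by have : (0:ℝ) ≤ (n:ℝ) := Nat.cast_nonneg n; linarith)
  choose zs hzs0 hzsD using hsol
  -- backward-forward local solution at a
  obtain ⟨w, hw0, hw⟩ := picard_sym hμ hμσ hδ (a := a) hK0
  set ε₀ := min 1 (1/(CC μ σ δ (a+1) K + 1)) with hε₀def
  have hC0 : 0 < CC μ σ δ (a+1) K := CC_pos hμ hμσ hδ hK0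
  have hε₀ : 0 < ε₀ := lt_min one_pos (by positivity)
  have hε₀1 : ε₀ ≤ 1 := min_le_left _ _
  -- w restricted forward solves on [a, a+ε₀]
  have hwf : ∀ t ∈ Icc a (a + ε₀), HasDerivWithinAt w (h μ σ δ t (w t)) (Icc a (a + ε₀)) t :=
    fun t ht => (hw t ⟨by linarith [ht.1], ht.2⟩).mono (Icc_subset_Icc_left (by linarith))
  -- uniqueness instances
  have huniq : ∀ (c₁ c₂ : ℝ) (z₁ z₂ : ℝ → ℝ), a ≤ c₁ → a ≤ c₂ → z₁ a = 0 → z₂ a = 0 →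
      (∀ t ∈ Icc a c₁, HasDerivWithinAt z₁ (h μ σ δ t (z₁ t)) (Icc a c₁) t) →
      (∀ t ∈ Icc a c₂, HasDerivWithinAt z₂ (h μ σ δ t (z₂ t)) (Icc a c₂) t) →
      EqOn z₁ z₂ (Icc a (min c₁ c₂)) :=
    fun c₁ c₂ z₁ z₂ h1 h2 h3 h4 h5 h6 => sol_unique hμ hμσ hδ hK8 hKd h1 h2 h3 h4 h5 h6
  -- the global function
  obtain ⟨Z, hZdef⟩ : ∃ Z : ℝ → ℝ, Z = fun t => if t ≤ a then w t else zs (⌈t - a⌉₊) t :=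
    ⟨_, rfl⟩
  have hZa : Z a = 0 := by rw [hZdef]; simp [hw0]
  have hZn : ∀ (n : ℕ) (t : ℝ), a < t → t ≤ a + n → Z t = zs n t := by
    intro n t hat htn
    have h1 : t - a ≤ (⌈t - a⌉₊ : ℝ) := Nat.le_ceil _
    have h2 : Z t = zs (⌈t - a⌉₊) t := by rw [hZdef]; simp [not_le.mpr hat]
    rw [h2]
    exact huniq (a + ⌈t - a⌉₊) (a + n) _ _ (by linarith) (by linarith)
      (hzs0 _) (hzs0 _) (hzsD _) (hzsD _) ⟨hat.le, le_min (by linarith) htn⟩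
  have hZw : ∀ t, t ≤ a + min ε₀ 1 → Z t = w t := by
    intro t ht
    rcases le_or_gt t a with hta | hta
    · rw [hZdef]; simp [hta]
    · have h1 : Z t = zs 1 t := hZn 1 t hta (by
        have := min_le_right ε₀ 1
        push_cast
        linarith)
      rw [h1]
      have := (huniq (a + ε₀) (a + 1) w (zs 1) (by linarith) (by linarith) hw0 (hzs0 1)
        hwf (by exact_mod_cast hzsD 1)) (x := t)
        ⟨hta.le, le_min (by have := min_le_left ε₀ 1; linarith)
          (by have := min_le_right ε₀ 1; push_cast; linarith)⟩
      rw [← this]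
  -- derivative of Z everywhere right of a - ε₀
  have hZD : ∀ t, a - ε₀ < t → HasDerivAt Z (h μ σ δ t (Z t)) t := by
    intro t htl
    rcases le_or_gt t a with hta | hta
    · have hwd : HasDerivAt w (h μ σ δ t (w t)) t :=
        (hw t ⟨htl.le, by linarith⟩).hasDerivAt (Icc_mem_nhds htl (by linarith))
      have hEq : Z =ᶠ[𝓝 t] w := by
        refine eventuallyEq_of_mem (Iio_mem_nhds (show t < a + min ε₀ 1 by
          have h1 : (0:ℝ) < min ε₀ 1 := lt_min hε₀ one_pos
          linarith)) ?_
        intro x hx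
        exact hZw x (le_of_lt hx)
      have hZt : Z t = w t := hZw t (by
        have h1 : (0:ℝ) < min ε₀ 1 := lt_min hε₀ one_pos
        linarith)
      rw [hZt]
      exact hwd.congr_of_eventuallyEq hEq
    · set n := ⌈t - a⌉₊ + 1 with hn
      have h1 : t - a ≤ (⌈t - a⌉₊ : ℝ) := Nat.le_ceil _
      have htn : t < a + n := by rw [hn]; push_cast; linarith
      have hd : HasDerivAt (zs n) (h μ σ δ t (zs n t)) t :=
        (hzsD n t ⟨hta.le, htn.le⟩).hasDerivAt (Icc_mem_nhds (by linarith) htn)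
      have hEq : Z =ᶠ[𝓝 t] zs n := by
        refine eventuallyEq_of_mem (Ioo_mem_nhds hta htn) ?_
        intro x hx
        exact hZn n x hx.1 hx.2.le
      have hZt : Z t = zs n t := hZn n t hta htn.le
      rw [hZt]
      exact hd.congr_of_eventuallyEq hEq
  -- bound on Z
  have hZB : ∀ t, a ≤ t → Z t ∈ Icc (-K) K := by
    intro t hat
    rcases eq_or_lt_of_le hat with he | hlt
    · rw [← he, hZa]
      constructor <;> [linarith; linarith]
    · set n := ⌈t - a⌉₊ + 1 with hn
      have h1 : t - a ≤ (⌈t - a⌉₊ : ℝ) := Nat.le_ceil _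
      have htn : t ≤ a + n := by rw [hn]; push_cast; linarith
      have hinv := invariance μ σ δ K a (a + n) (fun s => (hbar s).1) (fun s => (hbar s).2)
        (by linarith) (zs n) (hzs0 n) (hzsD n) t ⟨hat, htn⟩
      rw [hZn n t hlt htn]
      exact ⟨hinv.1.le, hinv.2.le⟩
  exact assemble μ σ δ Cbar a K ε₀ hε₀ Z hZa hZD hZB
end

section
/- Let Δ > 0 and let g : ℝ → ℝ be twice continuously differentiable on [y₀ − Δ, ∞) with g(y₀ − Δ) = C̄, g'(y₀ − Δ) = 0, and g''(y) = h(y, g'(y)) for all y ≥ y₀ − Δ. Then the set Z := { y > y₀ − Δ : g'(y) = 0 } is nonempty, and its infimum β̄_Δ := inf Z satisfies: β̄_Δ > y₀, g'(β̄_Δ) = 0, and g'(y) < 0 for all y ∈ (y₀ − Δ, β̄_Δ); in particular g is strictly decreasing on [y₀ − Δ, β̄_Δ]. -/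
open Real Set

lemma h_at_zero (μ σ δ y : ℝ) : h μ σ δ y 0 = 2/(1 + exp (-y)) - 2*μ/σ^2 := by
  simp [h]; ring

lemma exp_neg_y0 {μ σ : ℝ} (hμ : 0 < μ) (hμσ : μ < σ^2) :
    exp (-(y0 μ σ)) = σ^2/μ - 1 := by
  rw [y0, neg_neg, Real.exp_log]
  have : 1 < σ^2/μ := (one_lt_div hμ).2 hμσ
  linarith

lemma h0_neg {μ σ : ℝ} (δ : ℝ) (hμ : 0 < μ) (hμσ : μ < σ^2) {y : ℝ} (hy : y < y0 μ σ) :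
    h μ σ δ y 0 < 0 := by
  have hσ2 : 0 < σ^2 := hμ.trans hμσ
  rw [h_at_zero]
  have h1 : exp (-(y0 μ σ)) < exp (-y) := exp_lt_exp.2 (by linarith)
  rw [exp_neg_y0 hμ hμσ] at h1
  have h2 : σ^2/μ < 1 + exp (-y) := by linarith
  have h3 : 0 < σ^2/μ := div_pos hσ2 hμ
  have h4 : 2/(1 + exp (-y)) < 2/(σ^2/μ) :=
    div_lt_div_of_pos_left two_pos h3 h2
  have h5 : 2/(σ^2/μ) = 2*μ/σ^2 := by field_simp
  linarith [h4, h5.symm ▸ h4]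

lemma h0_pos {μ σ : ℝ} (δ : ℝ) (hμ : 0 < μ) (hμσ : μ < σ^2) {y : ℝ} (hy : y0 μ σ < y) :
    0 < h μ σ δ y 0 := by
  have hσ2 : 0 < σ^2 := hμ.trans hμσ
  rw [h_at_zero]
  have h1 : exp (-y) < exp (-(y0 μ σ)) := exp_lt_exp.2 (by linarith)
  rw [exp_neg_y0 hμ hμσ] at h1
  have h2 : 1 + exp (-y) < σ^2/μ := by linarith
  have hpos : (0:ℝ) < 1 + exp (-y) := by positivity
  have h4 : 2/(σ^2/μ) < 2/(1 + exp (-y)) :=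
    div_lt_div_of_pos_left two_pos hpos h2
  have h5 : 2/(σ^2/μ) = 2*μ/σ^2 := by field_simp
  linarith [h5 ▸ h4]

lemma h0_y0 {μ σ : ℝ} (δ : ℝ) (hμ : 0 < μ) (hμσ : μ < σ^2) : h μ σ δ (y0 μ σ) 0 = 0 := by
  have hσ2 : 0 < σ^2 := hμ.trans hμσ
  rw [h_at_zero]
  have := exp_neg_y0 hμ hμσ
  rw [this]
  have h3 : 1 + (σ^2/μ - 1) = σ^2/μ := by ring
  rw [h3]
  field_simp
  ring

lemma h0_mono {μ σ : ℝ} (δ : ℝ) {Y y : ℝ} (hle : Y ≤ y) : h μ σ δ Y 0 ≤ h μ σ δ y 0 := by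
  rw [h_at_zero, h_at_zero]
  have h1 : exp (-y) ≤ exp (-Y) := exp_le_exp.2 (by linarith)
  have h2 : (0:ℝ) < 1 + exp (-y) := by positivity
  have h4 : 2/(1 + exp (-Y)) ≤ 2/(1 + exp (-y)) :=
    div_le_div_of_nonneg_left (by norm_num) h2 (by linarith)
  linarith

lemma h_ge_h0 {μ σ δ : ℝ} (hμ : 0 < μ) (hμσ : μ < σ^2) (hδ : 0 < δ)
    {y z : ℝ} (hy : 2*μ ≤ δ*(1 + exp y)) (hz : z ≤ 0) :
    h μ σ δ y 0 ≤ h μ σ δ y z := by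
  have hσ2 : 0 < σ^2 := hμ.trans hμσ
  set E : ℝ := 1 + exp y with hE
  have hEpos : 0 < E := by positivity
  set F : ℝ := 2/(1 + exp (-y)) with hF
  have hFpos : 0 < F := by positivity
  have hdiff : h μ σ δ y z - h μ σ δ y 0 =
      ((4*μ)/σ^2 - F - 1 - (2*δ/σ^2)*E) * z
      + (-(2*μ)/σ^2 + 1 + (4*δ/σ^2)*E) * z^2
      - (2*δ/σ^2)*E * z^3 := by
    simp [h, hE, hF]; ring
  have hk : (4*μ)/σ^2 ≤ (2*δ/σ^2)*E := by
    have he : 2*δ/σ^2*E = (2*(δ*E))/σ^2 := by ring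
    rw [he, div_le_div_iff_of_pos_right hσ2]
    linarith
  have hB : ((4*μ)/σ^2 - F - 1 - (2*δ/σ^2)*E) ≤ 0 := by linarith
  have hC : 0 ≤ (-(2*μ)/σ^2 + 1 + (4*δ/σ^2)*E) := by
    have hneg : -(2*μ)/σ^2 = -(2*μ/σ^2) := by ring
    rw [hneg]
    have : (2*μ)/σ^2 ≤ (2*δ/σ^2)*E := by
      have h2 : (0:ℝ) < 2*μ := by linarith
      calc (2*μ)/σ^2 ≤ (4*μ)/σ^2 := by gcongr <;> linarith
        _ ≤ (2*δ/σ^2)*E := hk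
    have h4 : (2*δ/σ^2)*E ≤ (4*δ/σ^2)*E := by
      gcongr ?_ * E
      gcongr <;> linarith
    linarith
  have hD : 0 ≤ (2*δ/σ^2)*E := by positivity
  have t1 : 0 ≤ ((4*μ)/σ^2 - F - 1 - (2*δ/σ^2)*E) * z := by
    have := mul_nonneg (neg_nonneg.2 hB) (neg_nonneg.2 hz)
    rwa [neg_mul_neg] at this
  have t2 : 0 ≤ (-(2*μ)/σ^2 + 1 + (4*δ/σ^2)*E) * z^2 := mul_nonneg hC (sq_nonneg z)
  have hz3 : z^3 ≤ 0 := by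
    have : z^3 = z * z^2 := by ring
    rw [this]; exact mul_nonpos_of_nonpos_of_nonneg hz (sq_nonneg z)
  have t3 : (2*δ/σ^2)*E * z^3 ≤ 0 := mul_nonpos_of_nonneg_of_nonpos hD hz3
  linarith


lemma slope_small {f : ℝ → ℝ} {x d : ℝ} (hf : HasDerivAt f d x) (hd : d < 0) :
    ∃ η > 0, ∀ y, y ≠ x → |y - x| < η → slope f x y < d/2 := by
  rw [hasDerivAt_iff_tendsto_slope] at hf
  have hev : ∀ᶠ y in nhdsWithin x {x}ᶜ, slope f x y < d/2 :=
    hf.eventually_lt_const (by linarith)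
  rw [Filter.Eventually, Metric.mem_nhdsWithin_iff] at hev
  obtain ⟨η, hη, hball⟩ := hev
  refine ⟨η, hη, fun y hy hdist => hball ⟨?_, hy⟩⟩
  simpa [Metric.mem_ball, Real.dist_eq] using hdist

lemma pos_left_of_deriv_neg {f : ℝ → ℝ} {x d : ℝ} (hf : HasDerivAt f d x)
    (hx : f x = 0) (hd : d < 0) :
    ∃ η > 0, ∀ y, x - η < y → y < x → 0 < f y := by
  obtain ⟨η, hη, hs⟩ := slope_small hf hd
  refine ⟨η, hη, fun y h1 h2 => ?_⟩
  have := hs y (by linarith) (by rw [abs_lt]; constructor <;> linarith)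
  rw [slope_def_field] at this
  have hlt : (f y - f x)/(y - x) < 0 := by linarith
  rw [div_neg_iff] at hlt
  rcases hlt with ⟨h3, h4⟩ | ⟨h3, h4⟩
  · linarith
  · linarith

lemma neg_right_of_deriv_neg {f : ℝ → ℝ} {x d : ℝ} (hf : HasDerivAt f d x)
    (hx : f x = 0) (hd : d < 0) :
    ∃ η > 0, ∀ y, x < y → y < x + η → f y < 0 := by
  obtain ⟨η, hη, hs⟩ := slope_small hf hd
  refine ⟨η, hη, fun y h1 h2 => ?_⟩
  have := hs y (by linarith) (by rw [abs_lt]; constructor <;> linarith)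
  rw [slope_def_field] at this
  have hlt : (f y - f x)/(y - x) < 0 := by linarith
  rw [div_neg_iff] at hlt
  rcases hlt with ⟨h3, h4⟩ | ⟨h3, h4⟩
  · linarith
  · linarith

lemma neg_left_of_deriv_pos {f : ℝ → ℝ} {x d : ℝ} (hf : HasDerivAt f d x)
    (hx : f x = 0) (hd : 0 < d) :
    ∃ η > 0, ∀ y, x - η < y → y < x → f y < 0 := by
  obtain ⟨η, hη, hs⟩ := pos_left_of_deriv_neg (f := fun y => -(f y)) (hf.neg)
    (by simp [hx]) (by linarith)
  exact ⟨η, hη, fun y h1 h2 => by have := hs y h1 h2; simpa using this⟩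

lemma hasDerivAt_congr_d {f : ℝ → ℝ} {d q x : ℝ} (hf : HasDerivAt f d x) (he : d = q) :
    HasDerivAt f q x := he ▸ hf

/-- The first zero β̄_Δ of g' after y₀ - Δ exists, exceeds y₀, and g is
strictly decreasing up to it. -/
theorem first_zero_exists_and_exceeds_y0
    (μ σ δ Cbar Δ : ℝ) (hμ : 0 < μ) (hμσ : μ < σ^2) (hδ : 0 < δ) (hΔ : 0 < Δ)
    (g : ℝ → ℝ)
    (hg : ContDiffOn ℝ 2 g (Ici (y0 μ σ - Δ)))
    (hg0 : g (y0 μ σ - Δ) = Cbar)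
    (hg0' : deriv g (y0 μ σ - Δ) = 0)
    (hODE : ∀ y, y0 μ σ - Δ ≤ y → deriv (deriv g) y = h μ σ δ y (deriv g y)) :
    {y | y0 μ σ - Δ < y ∧ deriv g y = 0}.Nonempty ∧
    y0 μ σ < sInf {y | y0 μ σ - Δ < y ∧ deriv g y = 0} ∧
    deriv g (sInf {y | y0 μ σ - Δ < y ∧ deriv g y = 0}) = 0 ∧
    (∀ y ∈ Ioo (y0 μ σ - Δ) (sInf {y | y0 μ σ - Δ < y ∧ deriv g y = 0}),
      deriv g y < 0) ∧
    StrictAntiOn g (Icc (y0 μ σ - Δ) (sInf {y | y0 μ σ - Δ < y ∧ deriv g y = 0})) := by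
  have hσ2 : 0 < σ^2 := hμ.trans hμσ
  set a := y0 μ σ - Δ with ha
  set v := deriv g with hv
  have haly0 : a < y0 μ σ := by rw [ha]; linarith
  have hva : v a = 0 := hg0'
  -- v has the right derivative at every point of [a, ∞)
  have key : ∀ y, a ≤ y → HasDerivAt v (h μ σ δ y (v y)) y := by
    intro y hy
    have hdiff : DifferentiableAt ℝ v y := by
      rcases eq_or_lt_of_le hy with heq | hlt
      · by_contra hnd
        have h0 : deriv v y = 0 := deriv_zero_of_not_differentiableAt hnd
        have hode := hODE y hy
        rw [h0] at hode
        have hvy : v y = 0 := by rw [← heq]; exact hva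
        rw [hvy] at hode
        have hneg := h0_neg δ hμ hμσ (y := y) (by rw [← heq]; exact haly0)
        rw [← hode] at hneg
        exact lt_irrefl 0 hneg
      · have hct : ContDiffAt ℝ 2 g y := hg.contDiffAt (Ici_mem_nhds hlt)
        have h1 : ContDiffAt ℝ 1 (fderiv ℝ g) y := hct.fderiv_right (by norm_num)
        have h2 : DifferentiableAt ℝ (fderiv ℝ g) y := h1.differentiableAt (by norm_num)
        have h3 : v = fun t => fderiv ℝ g t 1 := by rw [hv]; ext t; rfl
        rw [h3]
        exact (ContinuousLinearMap.apply ℝ ℝ (1:ℝ)).differentiableAt.comp y h2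
    have hH := hdiff.hasDerivAt
    rwa [hODE y hy] at hH
  have hvconton : ∀ p q, a ≤ p → ContinuousOn v (Icc p q) := fun p q hp x hx =>
    ((key x (hp.trans hx.1)).continuousAt).continuousWithinAt
  -- v is negative just to the right of a
  have keya : HasDerivAt v (h μ σ δ a 0) a := by
    have := key a le_rfl; rwa [hva] at this
  obtain ⟨ε, hε, hεneg⟩ := neg_right_of_deriv_neg keya hva (h0_neg δ hμ hμσ haly0)
  set S := {y | a < y ∧ v y = 0} with hSdef
  -- IVT helper
  have ivt : ∀ p q, a ≤ p → p < q → v p < 0 → 0 < v q → ∃ r, p < r ∧ r < q ∧ v r = 0 := by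
    intro p q hp hpq hvp hvq
    have h0m : (0:ℝ) ∈ Ioo (v p) (v q) := ⟨hvp, hvq⟩
    obtain ⟨r, hr, hr0⟩ := intermediate_value_Ioo hpq.le (hvconton p q hp) h0m
    exact ⟨r, hr.1, hr.2, hr0⟩
  -- Existence of a zero
  have hS : S.Nonempty := by
    by_contra hSe
    have hnz : ∀ y, a < y → v y ≠ 0 := fun y hy h0 => hSe ⟨y, hy, h0⟩
    have hneg : ∀ y, a < y → v y < 0 := by
      intro y hy
      rcases lt_trichotomy (v y) 0 with hc | hc | hc
      · exact hc
      · exact absurd hc (hnz y hy)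
      · by_cases hyε : y < a + ε
        · exact absurd (hεneg y hy hyε) (by linarith)
        · push_neg at hyε
          have hp : v (a + ε/2) < 0 := hεneg _ (by linarith) (by linarith)
          obtain ⟨r, hr1, hr2, hr0⟩ := ivt (a + ε/2) y (by linarith) (by linarith) hp hc
          exact absurd hr0 (hnz r (by linarith))
    set Y := max (max (y0 μ σ + 1) (a + 1)) (Real.log (2*μ/δ)) with hY
    have hY1 : y0 μ σ < Y := by
      have : y0 μ σ + 1 ≤ Y := le_trans (le_max_left _ _) (le_max_left _ _)
      linarith
    have hYa : a < Y := by
      have : a + 1 ≤ Y := le_trans (le_max_right _ _) (le_max_left _ _)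
      linarith
    have hYc : Real.log (2*μ/δ) ≤ Y := le_max_right _ _
    have hYcond : ∀ y, Y ≤ y → 2*μ ≤ δ*(1 + exp y) := by
      intro y hy
      have h2 : 2*μ/δ ≤ exp y := by
        calc 2*μ/δ = exp (Real.log (2*μ/δ)) := (Real.exp_log (by positivity)).symm
          _ ≤ exp y := exp_le_exp.2 (le_trans hYc hy)
      have h3 : 2*μ ≤ δ * exp y := by
        rw [div_le_iff₀ hδ] at h2; linarith [mul_comm δ (exp y), h2]
      nlinarith [hδ.le, exp_pos y]
    have hcpos : 0 < h μ σ δ Y 0 := h0_pos δ hμ hμσ hY1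
    have hlb : ∀ x, Y ≤ x → h μ σ δ Y 0 ≤ h μ σ δ x (v x) := by
      intro x hx
      calc h μ σ δ Y 0 ≤ h μ σ δ x 0 := h0_mono δ hx
        _ ≤ h μ σ δ x (v x) := h_ge_h0 hμ hμσ hδ (hYcond x hx) (hneg x (lt_of_lt_of_le hYa hx)).le
    set c := h μ σ δ Y 0 with hc
    have hdu : ∀ x, a ≤ x → HasDerivAt (fun t => v t - c * t) (h μ σ δ x (v x) - c * 1) x :=
      fun x hx => (key x hx).sub ((hasDerivAt_id x).const_mul c)
    have humono : MonotoneOn (fun t => v t - c * t) (Ici Y) := by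
      apply monotoneOn_of_deriv_nonneg (convex_Ici Y)
      · exact fun x hx => (hdu x (hYa.le.trans hx)).continuousAt.continuousWithinAt
      · intro x hx
        rw [interior_Ici] at hx
        exact (hdu x (hYa.le.trans hx.le)).differentiableAt.differentiableWithinAt
      · intro x hx
        rw [interior_Ici] at hx
        rw [(hdu x (hYa.le.trans hx.le)).deriv]
        have := hlb x hx.le
        linarith
    have hvY : v Y < 0 := hneg Y hYa
    set y1 := Y + (1 - v Y)/c with hy1def
    have hy1 : Y < y1 := by
      rw [hy1def]
      have : 0 < (1 - v Y)/c := div_pos (by linarith) hcpos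
      linarith
    have hm := humono (self_mem_Ici) (mem_Ici.2 hy1.le) hy1.le
    have hcy1 : c * y1 = c * Y + (1 - v Y) := by
      rw [hy1def]; field_simp
    have hv1 : 1 ≤ v y1 := by
      simp only at hm
      nlinarith [hm]
    have := hneg y1 (hYa.trans hy1)
    linarith
  -- the infimum
  have hSlb : ∀ s ∈ S, a + ε ≤ s := by
    intro s hs
    by_contra hcon
    push_neg at hcon
    exact absurd hs.2 (ne_of_lt (hεneg s hs.1 hcon))
  have hbdd : BddBelow S := ⟨a + ε, fun s hs => hSlb s hs⟩
  have hSeq : S = {y | a + ε ≤ y ∧ v y = 0} := by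
    ext y
    constructor
    · exact fun hy => ⟨hSlb y hy, hy.2⟩
    · exact fun hy => ⟨by linarith [hy.1], hy.2⟩
  have hclosed : IsClosed {y | a + ε ≤ y ∧ v y = 0} := by
    have hset : {y | a + ε ≤ y ∧ v y = 0} = Ici (a + ε) ∩ v ⁻¹' {0} := by
      ext y; simp [mem_Ici]
    rw [hset]
    apply ContinuousOn.preimage_isClosed_of_isClosed ?_ isClosed_Ici isClosed_singleton
    exact fun x hx => ((key x (by linarith [mem_Ici.1 hx])).continuousAt).continuousWithinAt
  have hmem : sInf S ∈ S := by
    rw [hSeq]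
    exact hclosed.csInf_mem (hSeq ▸ hS) (hSeq ▸ hbdd)
  have hβa : a < sInf S := hmem.1
  have hvβ : v (sInf S) = 0 := hmem.2
  have hβle : ∀ s ∈ S, sInf S ≤ s := fun s hs => csInf_le hbdd hs
  -- v < 0 strictly between a and sInf S
  have hvneg : ∀ y ∈ Ioo a (sInf S), v y < 0 := by
    rintro y ⟨h1, h2⟩
    rcases lt_trichotomy (v y) 0 with hc | hc | hc
    · exact hc
    · exact absurd (hβle y ⟨h1, hc⟩) (by linarith)
    · by_cases hyε : y < a + ε
      · exact absurd (hεneg y h1 hyε) (by linarith)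
      · push_neg at hyε
        have hp : v (a + ε/2) < 0 := hεneg _ (by linarith) (by linarith)
        obtain ⟨r, hr1, hr2, hr0⟩ := ivt (a + ε/2) y (by linarith) (by linarith) hp hc
        have : sInf S ≤ r := hβle r ⟨by linarith, hr0⟩
        linarith
  -- sInf S exceeds y0
  have hβy0 : y0 μ σ < sInf S := by
    by_contra hcon
    push_neg at hcon
    have keyβ : HasDerivAt v (h μ σ δ (sInf S) 0) (sInf S) := by
      have := key (sInf S) hβa.le; rwa [hvβ] at this
    rcases lt_or_eq_of_le hcon with hlt | heqy0
    · obtain ⟨η, hη, hpos⟩ := pos_left_of_deriv_neg keyβ hvβ (h0_neg δ hμ hμσ hlt)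
      set m := max a (sInf S - η) with hm
      have hm1 : m < sInf S := max_lt hβa (by linarith)
      set ym := (m + sInf S)/2 with hym
      have hym1 : m < ym := by rw [hym]; linarith
      have hym2 : ym < sInf S := by rw [hym]; linarith
      have hyma : a < ym := lt_of_le_of_lt (le_max_left _ _) hym1
      have hymη : sInf S - η < ym := lt_of_le_of_lt (le_max_right _ _) hym1
      have := hpos ym hymη hym2
      have := hvneg ym ⟨hyma, hym2⟩
      linarith
    · -- sInf S = y0 : second order argument
      have hβ0 : h μ σ δ (sInf S) 0 = 0 := by rw [heqy0]; exact h0_y0 δ hμ hμσ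
      have keyβ0 : HasDerivAt v 0 (sInf S) := by rwa [hβ0] at keyβ
      -- derivative of x ↦ h μ σ δ x (v x) at sInf S
      have hexpneg : ∀ x : ℝ, HasDerivAt (fun t : ℝ => 1 + exp (-t)) (exp (-x) * -1) x :=
        fun x => ((hasDerivAt_neg x).exp).const_add 1
      have hLd : ∀ x : ℝ, HasDerivAt (fun t => 2/(1 + exp (-t)))
          ((0 * (1 + exp (-x)) - 2 * (exp (-x) * -1)) / (1 + exp (-x))^2) x :=
        fun x => (hasDerivAt_const x 2).div (hexpneg x) (by positivity)
      have hexpy2 : ∀ x : ℝ, HasDerivAt (fun t : ℝ => (2*δ/σ^2) * (1 + exp t))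
          ((2*δ/σ^2) * exp x) x :=
        fun x => ((Real.hasDerivAt_exp x).const_add 1).const_mul (2*δ/σ^2)
      have hexpy4 : ∀ x : ℝ, HasDerivAt (fun t : ℝ => (4*δ/σ^2) * (1 + exp t))
          ((4*δ/σ^2) * exp x) x :=
        fun x => ((Real.hasDerivAt_exp x).const_add 1).const_mul (4*δ/σ^2)
      set β' := sInf S with hβ'
      have hA : HasDerivAt (fun x => -(2*μ)/σ^2 + 2/(1 + exp (-x)))
          ((0 * (1 + exp (-β')) - 2 * (exp (-β') * -1)) / (1 + exp (-β'))^2) β' :=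
        (hLd β').const_add (-(2*μ)/σ^2)
      have hB := (((hasDerivAt_const β' ((4*μ)/σ^2)).sub (hLd β')).sub
          (hasDerivAt_const β' 1)).sub (hexpy2 β')
      have hC := (hasDerivAt_const β' (-(2*μ)/σ^2 + 1)).add (hexpy4 β')
      have hBv := hB.mul keyβ0
      have hCv := hC.mul (keyβ0.pow 2)
      have hDv := (hexpy2 β').mul (keyβ0.pow 3)
      have hqpos : 0 < (0 * (1 + exp (-β')) - 2 * (exp (-β') * -1)) / (1 + exp (-β'))^2 := by
        have h1 : (0 * (1 + exp (-β')) - 2 * (exp (-β') * -1)) = 2 * exp (-β') := by ring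
        rw [h1]; positivity
      have Hw : HasDerivAt (fun x => h μ σ δ x (v x))
          ((0 * (1 + exp (-β')) - 2 * (exp (-β') * -1)) / (1 + exp (-β'))^2) β' := by
        have H := ((hA.add hBv).add hCv).sub hDv
        have hfun : (fun x => h μ σ δ x (v x)) = (fun x =>
            (-(2*μ)/σ^2 + 2/(1 + exp (-x)))
            + ((4*μ)/σ^2 - 2/(1 + exp (-x)) - 1 - (2*δ/σ^2)*(1 + exp x)) * v x
            + (-(2*μ)/σ^2 + 1 + (4*δ/σ^2)*(1 + exp x)) * (v x)^2
            - (2*δ/σ^2)*(1 + exp x) * (v x)^3) := by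
          funext x; rw [h]
        rw [hfun]
        exact hasDerivAt_congr_d H (by rw [hvβ]; simp only [Pi.pow_apply, hvβ]; push_cast; ring)
      have hw0 : (fun x => h μ σ δ x (v x)) β' = 0 := by
        show h μ σ δ β' (v β') = 0
        rw [hvβ]; exact hβ0
      obtain ⟨η, hη, hwneg⟩ := neg_left_of_deriv_pos Hw hw0 hqpos
      set m := max a (β' - η) with hm
      have hm1 : m < β' := max_lt hβa (by linarith)
      set ym := (m + β')/2 with hym
      have hym1 : m < ym := by rw [hym]; linarith
      have hym2 : ym < β' := by rw [hym]; linarith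
      have hyma : a < ym := lt_of_le_of_lt (le_max_left _ _) hym1
      have hymη : β' - η < ym := lt_of_le_of_lt (le_max_right _ _) hym1
      -- MVT on [ym, β']
      obtain ⟨ξ, hξ, hslope⟩ := exists_hasDerivAt_eq_slope v (fun x => h μ σ δ x (v x))
        hym2 (hvconton ym β' hyma.le)
        (fun x hx => key x (by linarith [hx.1]))
      have hwξ : h μ σ δ ξ (v ξ) < 0 := hwneg ξ (by linarith [hξ.1]) hξ.2
      rw [hslope] at hwξ
      rw [hvβ] at hwξ
      have hd : (0:ℝ) < β' - ym := by linarith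
      have hvym : 0 < v ym := by
        have h5 : (0 - v ym)/(β' - ym) < 0 := hwξ
        rw [div_neg_iff] at h5
        rcases h5 with ⟨h6, h7⟩ | ⟨h6, h7⟩
        · linarith
        · linarith
      have := hvneg ym ⟨hyma, hym2⟩
      linarith
  refine ⟨hS, hβy0, hvβ, hvneg, ?_⟩
  apply strictAntiOn_of_deriv_neg (convex_Icc a (sInf S))
    (hg.continuousOn.mono Icc_subset_Ici_self)
  intro x hx
  rw [interior_Icc] at hx
  exact hvneg x hx
end

section
/- There exist Y ∈ ℝ and ε > 0 such that for all y ≥ Y and all z ∈ [−M', 0], one has h(y, z) ≥ ε. (That is, for sufficiently large y, the right-hand side of the ODE is positive and bounded away from zero uniformly over nonpositive slopes of magnitude at most M'.) -/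
open Real Set

set_option maxHeartbeats 1600000 in
/-- For sufficiently large y, the right-hand side of the ODE is positive and
bounded away from zero, uniformly over slopes in [-M', 0]. -/
theorem h_uniformly_pos_for_large_y
    (μ σ δ : ℝ) (hμ : 0 < μ) (hμσ : μ < σ^2) (hδ : 0 < δ) :
    ∃ Y ε : ℝ, 0 < ε ∧
      ∀ y : ℝ, Y ≤ y → ∀ z ∈ Icc (-(M' μ σ δ)) 0, ε ≤ h μ σ δ y z := by
  have hσ2 : (0:ℝ) < σ^2 := hμ.trans hμσ
  set A : ℝ := 2*μ/σ^2 with hAdef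
  have hA0 : 0 < A := by positivity
  have hA2 : A < 2 := by
    rw [hAdef, div_lt_iff₀ hσ2]; linarith
  set M : ℝ := M' μ σ δ with hMdef
  have hM0 : (0:ℝ) ≤ M := by
    have h1 : (0:ℝ) ≤ 8 + (4*μ + 2*σ^2)/δ := by positivity
    calc (0:ℝ) ≤ 8 + (4*μ+2*σ^2)/δ := h1
      _ ≤ M := le_max_of_le_right (le_max_right _ _)
  set ε : ℝ := (2 - A)/2 with hεdef
  have hε : 0 < ε := by rw [hεdef]; linarith
  set N : ℝ := max (2/ε) (σ^2*(2+2*A+(1+A)*M)/(2*δ)) + 1 with hNdef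
  have hN0 : 0 < N := by
    have h1 : (0:ℝ) < 2/ε := by positivity
    have h2 := le_max_left (2/ε) (σ^2*(2+2*A+(1+A)*M)/(2*δ))
    rw [hNdef]; linarith
  refine ⟨Real.log N, ε, hε, ?_⟩
  intro y hy z hz
  obtain ⟨hz1, hz2⟩ := hz
  have hey : N ≤ Real.exp y := by
    calc N = Real.exp (Real.log N) := (Real.exp_log hN0).symm
      _ ≤ Real.exp y := Real.exp_le_exp.mpr hy
  have heyp : (0:ℝ) < Real.exp y := Real.exp_pos y
  have hey2 : 2/ε ≤ Real.exp y := by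
    have := le_max_left (2/ε) (σ^2*(2+2*A+(1+A)*M)/(2*δ))
    rw [hNdef] at hey; linarith
  have hexpneg : Real.exp (-y) ≤ ε/2 := by
    rw [Real.exp_neg]
    rw [inv_le_iff_one_le_mul₀ heyp]  -- may need adjust
    have h2 : 2 ≤ ε * Real.exp y := (div_le_iff₀' hε).mp hey2
    nlinarith
  have hden : (0:ℝ) < 1 + Real.exp (-y) := by positivity
  set B : ℝ := 2/(1 + Real.exp (-y)) with hBdef
  have hB0 : 0 < B := by positivity
  have hBA : A + ε ≤ B := by
    rw [hBdef, le_div_iff₀ hden]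
    have hAε : (0:ℝ) < A + ε := by positivity
    nlinarith [sq_nonneg (A - 2), Real.exp_pos (-y)]
  set C : ℝ := 2*δ/σ^2*(1 + Real.exp y) with hCdef
  have hC0 : (0:ℝ) < C := by positivity
  have hCge : 2+2*A+(1+A)*M ≤ C := by
    have h3 : σ^2*(2+2*A+(1+A)*M)/(2*δ) ≤ Real.exp y := by
      have := le_max_right (2/ε) (σ^2*(2+2*A+(1+A)*M)/(2*δ))
      rw [hNdef] at hey; linarith
    rw [div_le_iff₀ (by positivity : (0:ℝ) < 2*δ)] at h3
    rw [hCdef, div_mul_eq_mul_div, le_div_iff₀ hσ2]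
    nlinarith
  have hid : h μ σ δ y z
      = (B - A) + (-z) * ((B + 1 - 2*A) + (1-A)*(-z) + C*(1-z)^2) := by
    rw [hBdef, hCdef, hAdef]
    unfold h
    field_simp
    ring
  rw [hid]
  have ht0 : 0 ≤ -z := by linarith
  have htM : -z ≤ M := by linarith
  have hbr : 0 ≤ (B + 1 - 2*A) + (1-A)*(-z) + C*(1-z)^2 := by
    have h1 : C ≤ C*(1-z)^2 := by
      nlinarith [mul_nonneg hC0.le (mul_nonneg ht0 (by linarith : (0:ℝ) ≤ 2 - z))]
    have h2 : -((1+A)*M) ≤ (1-A)*(-z) := by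
      nlinarith [mul_nonneg hA0.le (by linarith : (0:ℝ) ≤ M + z)]
    linarith
  have h3 := mul_nonneg ht0 hbr
  linarith
end

section
/- For every ε > 0 there exists Δ₀ ∈ (0, 1] such that for every Δ ∈ (0, Δ₀) and every function g that is twice continuously differentiable on [y₀ − Δ, ∞) with g(y₀ − Δ) = C̄, g'(y₀ − Δ) = 0 and g''(y) = h(y, g'(y)) for all y ≥ y₀ − Δ, the first zero β̄_Δ := inf{ y > y₀ − Δ : g'(y) = 0 } of g' satisfies β̄_Δ − (y₀ − Δ) < ε and C̄ − g(β̄_Δ) < ε. In other words, g(β̄_Δ) → C̄ as Δ → 0⁺. -/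
open Real Set

/-- The constant coefficient. -/
noncomputable def cc (μ σ y : ℝ) : ℝ := -(2*μ)/σ^2 + 2/(1 + Real.exp (-y))

/-- Bound for the lower-order coefficients. -/
noncomputable def Kc (μ σ δ : ℝ) : ℝ :=
  (4*μ/σ^2 + 3 + 2*δ/σ^2*(1 + Real.exp (y0 μ σ + 1)))
  + (2*μ/σ^2 + 1 + 4*δ/σ^2*(1 + Real.exp (y0 μ σ + 1)))

lemma Kc_pos {μ σ : ℝ} (δ : ℝ) (hμ : 0 < μ) (hμσ : μ < σ^2) (hδ : 0 < δ) : 0 < Kc μ σ δ := by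
  have hσ : 0 < σ^2 := hμ.trans hμσ
  unfold Kc; positivity

lemma h_zero (μ σ δ y : ℝ) : h μ σ δ y 0 = cc μ σ y := by simp [h, cc]

lemma cc_lt_cc (μ σ : ℝ) (hμ : 0 < μ) (hσ : 0 < σ^2) {y₁ y₂ : ℝ} (hy : y₁ < y₂) :
    cc μ σ y₁ < cc μ σ y₂ := by
  unfold cc
  have h1 : exp (-y₂) < exp (-y₁) := exp_lt_exp.2 (by linarith)
  have h2 : 0 < 1 + exp (-y₂) := by positivity
  have h3 := div_lt_div_of_pos_left (show (0:ℝ) < 2 by norm_num) h2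
    (show 1 + exp (-y₂) < 1 + exp (-y₁) by linarith)
  linarith

lemma cc_le_cc (μ σ : ℝ) (hμ : 0 < μ) (hσ : 0 < σ^2) {y₁ y₂ : ℝ} (hy : y₁ ≤ y₂) :
    cc μ σ y₁ ≤ cc μ σ y₂ := by
  rcases eq_or_lt_of_le hy with hEq | hlt
  · rw [hEq]
  · exact (cc_lt_cc μ σ hμ hσ hlt).le

lemma y0_exp {μ σ : ℝ} (hμ : 0 < μ) (hμσ : μ < σ^2) : Real.exp (-(y0 μ σ)) = σ^2/μ - 1 := by
  unfold y0
  rw [neg_neg, Real.exp_log]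
  have : 1 < σ^2/μ := (one_lt_div hμ).2 hμσ
  linarith

lemma cc_y0 {μ σ : ℝ} (hμ : 0 < μ) (hμσ : μ < σ^2) : cc μ σ (y0 μ σ) = 0 := by
  have hσ : 0 < σ^2 := hμ.trans hμσ
  unfold cc
  rw [y0_exp hμ hμσ]
  have h1 : 1 + (σ^2/μ - 1) = σ^2/μ := by ring
  rw [h1]
  field_simp
  ring

lemma cc_lt_two {μ σ : ℝ} (hμ : 0 < μ) (hσ : 0 < σ^2) (y : ℝ) : cc μ σ y < 2 := by
  unfold cc
  have h1 : 0 < exp (-y) := exp_pos _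
  have h2 : 2/(1 + exp (-y)) ≤ 2 := by
    rw [div_le_iff₀ (by positivity)]
    nlinarith
  have h3 : -(2*μ)/σ^2 < 0 := by
    have h4 : 0 < (2*μ)/σ^2 := by positivity
    have h5 : -(2*μ)/σ^2 = -((2*μ)/σ^2) := by ring
    linarith
  linarith

lemma cubic_lb {b q r K₁ K₂ z : ℝ} (hb : |b| ≤ K₁) (hq : |q| ≤ K₂) (hr : 0 ≤ r)
    (h1 : -1 ≤ z) (h0 : z ≤ 0) : (K₁ + K₂) * z ≤ b * z + q * z^2 - r * z^3 := by
  obtain ⟨hb1, hb2⟩ := abs_le.mp hb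
  obtain ⟨hq1, hq2⟩ := abs_le.mp hq
  have hz : 0 ≤ -z := neg_nonneg.2 h0
  have hK₂ : 0 ≤ K₂ := le_trans (abs_nonneg q) hq
  have ha : 0 ≤ (K₁ - b) * (-z) := mul_nonneg (by linarith) hz
  have hb' : 0 ≤ (q + K₂) * z^2 := mul_nonneg (by linarith) (sq_nonneg z)
  have hc : 0 ≤ K₂ * (-(z + z^2)) := mul_nonneg hK₂ (by nlinarith)
  have hd : 0 ≤ r * (-z^3) := mul_nonneg hr (by nlinarith)
  nlinarith [ha, hb', hc, hd]

lemma h_lb {μ σ δ : ℝ} (hμ : 0 < μ) (hμσ : μ < σ^2) (hδ : 0 < δ) {y z : ℝ}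
    (hy : y ≤ y0 μ σ + 1) (hz1 : -1 ≤ z) (hz0 : z ≤ 0) :
    cc μ σ y + Kc μ σ δ * z ≤ h μ σ δ y z := by
  have hσ : 0 < σ^2 := hμ.trans hμσ
  set E := Real.exp (y0 μ σ + 1) with hE
  have hey : exp y ≤ E := exp_le_exp.2 hy
  have heyp : 0 < exp y := exp_pos _
  set s := 2/(1 + exp (-y)) with hs
  have hs0 : 0 ≤ s := by positivity
  have hs2 : s ≤ 2 := by
    rw [hs, div_le_iff₀ (by positivity)]
    nlinarith [exp_pos (-y)]
  have hd2 : (2*δ/σ^2)*(1 + exp y) ≤ 2*δ/σ^2*(1 + E) := by gcongr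
  have hd4 : (4*δ/σ^2)*(1 + exp y) ≤ 4*δ/σ^2*(1 + E) := by gcongr
  have hd20 : 0 ≤ (2*δ/σ^2)*(1 + exp y) := by positivity
  have hd40 : 0 ≤ (4*δ/σ^2)*(1 + exp y) := by positivity
  have hμ4 : 0 ≤ 4*μ/σ^2 := by positivity
  have hμ2 : 0 ≤ 2*μ/σ^2 := by positivity
  have hb : |(4*μ)/σ^2 - s - 1 - (2*δ/σ^2)*(1 + exp y)| ≤ 4*μ/σ^2 + 3 + 2*δ/σ^2*(1 + E) := by
    rw [abs_le]
    constructor <;> nlinarith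
  have hq : |(-(2*μ)/σ^2 + 1 + (4*δ/σ^2)*(1 + exp y))| ≤ 2*μ/σ^2 + 1 + 4*δ/σ^2*(1 + E) := by
    have hneg : -(2*μ)/σ^2 = -(2*μ/σ^2) := by ring
    rw [abs_le, hneg]
    constructor <;> nlinarith
  have hkey := cubic_lb hb hq hd20 hz1 hz0
  unfold h Kc cc
  rw [← hE, ← hs]
  linarith [hkey]

lemma cc_lb {μ σ : ℝ} (hμ : 0 < μ) (hμσ : μ < σ^2) {Δ : ℝ} (h0 : 0 < Δ) (h1 : Δ ≤ 1) :
    -(2 * Real.exp (-(y0 μ σ)) * Real.exp 1 * Δ) ≤ cc μ σ (y0 μ σ - Δ) := by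
  have hσ : 0 < σ^2 := hμ.trans hμσ
  set x := Real.exp (-(y0 μ σ)) with hx
  have hxp : 0 < x := exp_pos _
  have hxd : Real.exp (-(y0 μ σ - Δ)) = x * Real.exp Δ := by
    rw [hx, ← Real.exp_add]; ring_nf
  have hccy0 : cc μ σ (y0 μ σ) = 0 := cc_y0 hμ hμσ
  have hE1 : 1 ≤ Real.exp Δ := Real.one_le_exp h0.le
  have hEe : Real.exp Δ ≤ Real.exp 1 := Real.exp_le_exp.2 h1
  have hprod : Real.exp Δ * Real.exp (-Δ) = 1 := by rw [← Real.exp_add]; simp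
  have hA : 1 - Δ ≤ Real.exp (-Δ) := by linarith [Real.add_one_le_exp (-Δ)]
  have hB : Real.exp Δ * (1 - Δ) ≤ 1 := by
    calc Real.exp Δ * (1 - Δ) ≤ Real.exp Δ * Real.exp (-Δ) :=
          mul_le_mul_of_nonneg_left hA (Real.exp_pos Δ).le
      _ = 1 := hprod
  have hexpΔ : Real.exp Δ - 1 ≤ Δ * Real.exp 1 := by nlinarith [Real.exp_pos Δ]
  -- cc (y0 - Δ) = -2μ/σ² + 2/(1 + x e^Δ), and -2μ/σ² = -2/(1+x)
  have hccy0' : -(2*μ)/σ^2 = -(2/(1 + x)) := by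
    have h' : cc μ σ (y0 μ σ) = -(2*μ)/σ^2 + 2/(1 + x) := by unfold cc; rw [← hx]
    rw [h'] at hccy0
    linarith
  unfold cc
  rw [hxd, hccy0']
  have hAp : (0:ℝ) < 1 + x := by positivity
  have hBp : (0:ℝ) < 1 + x * Real.exp Δ := by positivity
  have key : 2/(1 + x) - 2/(1 + x * Real.exp Δ)
      = 2*x*(Real.exp Δ - 1)/((1 + x)*(1 + x * Real.exp Δ)) := by
    field_simp
    ring
  have hden : 1 ≤ (1 + x)*(1 + x * Real.exp Δ) := by nlinarith
  have hnum : 0 ≤ 2*x*(Real.exp Δ - 1) := by nlinarith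
  have hdiv : 2*x*(Real.exp Δ - 1)/((1 + x)*(1 + x * Real.exp Δ)) ≤ 2*x*(Real.exp Δ - 1) :=
    div_le_self hnum hden
  have hfin : 2*x*(Real.exp Δ - 1) ≤ 2*x*(Δ * Real.exp 1) :=
    mul_le_mul_of_nonneg_left hexpΔ (by positivity)
  linarith [key, hdiv, hfin]

set_option maxHeartbeats 1600000 in
/-- Step 1 of the proof of Proposition p:FBVP: g(β̄_Δ) → C̄ as Δ → 0⁺. -/
theorem g_at_first_zero_tendsto_Cbar
    (μ σ δ Cbar : ℝ) (hμ : 0 < μ) (hμσ : μ < σ^2) (hδ : 0 < δ) :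
    ∀ ε : ℝ, 0 < ε → ∃ Δ₀ : ℝ, 0 < Δ₀ ∧ Δ₀ ≤ 1 ∧
      ∀ Δ : ℝ, 0 < Δ → Δ < Δ₀ →
        ∀ g : ℝ → ℝ,
          ContDiffOn ℝ 2 g (Ici (y0 μ σ - Δ)) →
          g (y0 μ σ - Δ) = Cbar →
          deriv g (y0 μ σ - Δ) = 0 →
          (∀ y, y0 μ σ - Δ ≤ y → deriv (deriv g) y = h μ σ δ y (deriv g y)) →
          sInf {y | y0 μ σ - Δ < y ∧ deriv g y = 0} - (y0 μ σ - Δ) < ε ∧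
          Cbar - g (sInf {y | y0 μ σ - Δ < y ∧ deriv g y = 0}) < ε := by
  intro ε hε
  have hσ2 : 0 < σ^2 := hμ.trans hμσ
  set K := Kc μ σ δ with hK_def
  have hK0 : 0 < K := Kc_pos δ hμ hμσ hδ
  have hmin0 : 0 < min ε 1 := lt_min hε one_pos
  have hminε : min ε 1 ≤ ε := min_le_left _ _
  have hmin1 : min ε 1 ≤ 1 := min_le_right _ _
  set η := min ε 1 / (8*(K+1)) with hη_def
  have h8K : (0:ℝ) < 8*(K+1) := by positivity
  have hη0 : 0 < η := div_pos hmin0 h8K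
  have hKη : K * η ≤ 1/8 := by
    rw [hη_def, ← mul_div_assoc, div_le_iff₀ h8K]
    nlinarith
  have hηε : η ≤ min ε 1 / 8 := by
    rw [hη_def]
    gcongr
    nlinarith
  have hη18 : η ≤ 1/8 := le_trans hηε (by linarith)
  set c₀ := cc μ σ (y0 μ σ + η) with hc0_def
  have hc00 : 0 < c₀ := by
    have h1 := cc_lt_cc μ σ hμ hσ2 (show y0 μ σ < y0 μ σ + η by linarith)
    rw [cc_y0 hμ hμσ] at h1
    exact h1
  have hc02 : c₀ < 2 := cc_lt_two hμ hσ2 _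
  set m := min 1 (c₀ * η) with hm_def
  have hm0 : 0 < m := lt_min one_pos (by positivity)
  have hm1 : m ≤ 1 := min_le_left _ _
  have hmcη : m ≤ c₀ * η := min_le_right _ _
  have hKm : K * m ≤ c₀/8 := by nlinarith
  set C₁ := 2 * Real.exp (-(y0 μ σ)) * Real.exp 1 with hC1_def
  have hC10 : 0 < C₁ := by positivity
  set Δ₀ := min η (m/(4*(C₁+1))) with hΔ₀_def
  have hΔ₀0 : 0 < Δ₀ := lt_min hη0 (by positivity)
  have hΔ₀1 : Δ₀ ≤ 1 := le_trans (min_le_left _ _) (by linarith)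
  clear_value K η c₀ m C₁ Δ₀
  refine ⟨Δ₀, hΔ₀0, hΔ₀1, ?_⟩
  intro Δ hΔ0 hΔΔ₀ g hg hgC hg'0 hode
  set a := y0 μ σ - Δ with ha_def
  have hΔη : Δ ≤ η := le_trans hΔΔ₀.le (by rw [hΔ₀_def]; exact min_le_left _ _)
  have hΔm : Δ < m/(4*(C₁+1)) := lt_of_lt_of_le hΔΔ₀ (by rw [hΔ₀_def]; exact min_le_right _ _)
  have hΔ1 : Δ ≤ 1 := le_trans hΔη (by linarith)
  set T := Δ + η + 4*m/c₀ with hT_def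
  clear_value a T
  have h4m : 4*m/c₀ ≤ 4*η := by
    rw [div_le_iff₀ hc00]; nlinarith
  have h4m0 : 0 < 4*m/c₀ := by positivity
  have hT6 : T ≤ 6*η := by rw [hT_def]; linarith
  have hTε : T < ε := by
    have : 6*η ≤ (6/8) * min ε 1 := by linarith
    linarith
  have hT1 : T < 1 := by
    have : 6*η ≤ (6/8) * min ε 1 := by linarith
    linarith
  have hT0 : 0 < T := by rw [hT_def]; linarith
  have hreg : ∀ y : ℝ, y ≤ a + T → y ≤ y0 μ σ + 1 := by
    intro y hy
    rw [ha_def, hT_def] at hy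
    linarith
  -- basic sign facts about cc at a
  have hccalt : cc μ σ a < 0 := by
    have h1 := cc_lt_cc μ σ hμ hσ2 (show a < y0 μ σ by rw [ha_def]; linarith)
    rw [cc_y0 hμ hμσ] at h1
    exact h1
  have hccalb : -(C₁ * Δ) ≤ cc μ σ a := by
    have := cc_lb hμ hμσ hΔ0 hΔ1
    rw [← ha_def] at this
    rw [hC1_def]
    linarith
  -- analytic preliminaries
  have hg_diffAt : ∀ x : ℝ, a < x → DifferentiableAt ℝ g x := by
    intro x hx
    exact ((hg.differentiableOn (by norm_num)) x hx.le).differentiableAt (Ici_mem_nhds hx)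
  have hg_hasDeriv : ∀ x : ℝ, a < x → HasDerivAt g (deriv g x) x := fun x hx =>
    (hg_diffAt x hx).hasDerivAt
  have hv : ContDiffOn ℝ 1 (derivWithin g (Ici a)) (Ici a) :=
    hg.derivWithin (uniqueDiffOn_Ici a) (by norm_num)
  have hveq : ∀ y : ℝ, a < y → derivWithin g (Ici a) y = deriv g y := fun y hy =>
    derivWithin_of_mem_nhds (Ici_mem_nhds hy)
  have hu_diffAt : ∀ y : ℝ, a < y → DifferentiableAt ℝ (deriv g) y := by
    intro y hy
    have h1 : DifferentiableAt ℝ (derivWithin g (Ici a)) y :=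
      ((hv.differentiableOn one_ne_zero) y hy.le).differentiableAt (Ici_mem_nhds hy)
    have heq : deriv g =ᶠ[nhds y] derivWithin g (Ici a) :=
      Filter.eventuallyEq_of_mem (Ioi_mem_nhds hy) (fun y' hy' => (hveq y' hy').symm)
    exact h1.congr_of_eventuallyEq heq
  have hu_hasDeriv : ∀ y : ℝ, a < y → HasDerivAt (deriv g) (h μ σ δ y (deriv g y)) y := by
    intro y hy
    have h1 := (hu_diffAt y hy).hasDerivAt
    rwa [hode y hy.le] at h1
  -- behaviour at the left endpoint
  have hodea := hode a le_rfl
  rw [hg'0, h_zero] at hodea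
  have hdiffa : DifferentiableAt ℝ (deriv g) a := by
    by_contra hc
    rw [deriv_zero_of_not_differentiableAt hc] at hodea
    exact absurd hodea.symm (ne_of_lt hccalt)
  have hu_a : HasDerivAt (deriv g) (cc μ σ a) a := hodea ▸ hdiffa.hasDerivAt
  have hu_contAt : ∀ y : ℝ, a ≤ y → ContinuousAt (deriv g) y := by
    intro y hy
    rcases eq_or_lt_of_le hy with hEq | hlt
    · exact hEq ▸ hdiffa.continuousAt
    · exact (hu_diffAt y hlt).continuousAt
  -- quantified derivative lower bound
  have hderiv_lb : ∀ y : ℝ, a ≤ y → y ≤ a + T → -m ≤ deriv g y → deriv g y ≤ 0 →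
      cc μ σ a + K * (deriv g y) ≤ h μ σ δ y (deriv g y) := by
    intro y hy1 hy2 hz1 hz2
    have h1 := h_lb hμ hμσ hδ (hreg y hy2) (by linarith : -1 ≤ deriv g y) hz2
    have h2 : cc μ σ a ≤ cc μ σ y := cc_le_cc μ σ hμ hσ2 hy1
    rw [← hK_def] at h1
    linarith
  -- bootstrap: while nonpositive, the derivative stays above -m
  have claim_lb : ∀ s : ℝ, a ≤ s → s ≤ a + T →
      (∀ y : ℝ, a ≤ y → y ≤ s → deriv g y ≤ 0) →
      ∀ y : ℝ, a ≤ y → y ≤ s → -m < deriv g y := by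
    intro s hs1 hs2 hnonpos y₂ hy₂1 hy₂2
    by_contra hcon
    push_neg at hcon
    have hcontIcc : ContinuousOn (deriv g) (Icc a s) := fun y hy =>
      (hu_contAt y hy.1).continuousWithinAt
    have hStclosed : IsClosed (Icc a s ∩ deriv g ⁻¹' Iic (-m)) :=
      hcontIcc.preimage_isClosed_of_isClosed isClosed_Icc isClosed_Iic
    have hStne : (Icc a s ∩ deriv g ⁻¹' Iic (-m)).Nonempty := ⟨y₂, ⟨hy₂1, hy₂2⟩, hcon⟩
    have hbdd : BddBelow (Icc a s ∩ deriv g ⁻¹' Iic (-m)) := ⟨a, fun y hy => hy.1.1⟩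
    set t := sInf (Icc a s ∩ deriv g ⁻¹' Iic (-m)) with ht_def
    clear_value t
    have htmem : t ∈ Icc a s ∩ deriv g ⁻¹' Iic (-m) := ht_def ▸ hStclosed.csInf_mem hStne hbdd
    have htval : deriv g t ≤ -m := htmem.2
    have hta : a < t := by
      rcases eq_or_lt_of_le htmem.1.1 with hEq | hlt
      · exfalso; rw [← hEq, hg'0] at htval; linarith
      · exact hlt
    have hlt : ∀ y : ℝ, a ≤ y → y < t → -m < deriv g y := by
      intro y hy1 hy2
      by_contra hc
      push_neg at hc
      have hyS : y ∈ Icc a s ∩ deriv g ⁻¹' Iic (-m) :=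
        ⟨⟨hy1, le_trans hy2.le htmem.1.2⟩, hc⟩
      have := csInf_le hbdd hyS
      rw [← ht_def] at this
      linarith
    obtain ⟨ξ, hξIoo, hslope⟩ := exists_hasDerivAt_eq_slope (deriv g)
      (fun y => h μ σ δ y (deriv g y)) hta
      (hcontIcc.mono (Icc_subset_Icc le_rfl htmem.1.2))
      (fun x hx => hu_hasDeriv x hx.1)
    have hξb1 : -m ≤ deriv g ξ := (hlt ξ hξIoo.1.le hξIoo.2).le
    have hξb2 : deriv g ξ ≤ 0 := hnonpos ξ hξIoo.1.le (le_trans hξIoo.2.le htmem.1.2)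
    have hξT : ξ ≤ a + T := le_trans hξIoo.2.le (le_trans htmem.1.2 hs2)
    have hlow := hderiv_lb ξ hξIoo.1.le hξT hξb1 hξb2
    have hKuξ : -(K*m) ≤ K * deriv g ξ := by
      have := mul_le_mul_of_nonneg_left hξb1 hK0.le
      linarith
    have hslope_lb : -(C₁*Δ) - K*m ≤ (deriv g t - deriv g a)/(t - a) := by
      rw [← hslope]
      show -(C₁*Δ) - K*m ≤ h μ σ δ ξ (deriv g ξ)
      linarith
    rw [hg'0, sub_zero] at hslope_lb
    have hta' : 0 < t - a := by linarith
    have hlb2 : (-(C₁*Δ) - K*m) * (t - a) ≤ deriv g t := by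
      have := (le_div_iff₀ hta').mp hslope_lb
      linarith
    have htaT : t - a ≤ T := by
      have := htmem.1.2
      linarith
    -- derive the contradiction
    have e1 : K*m*(t - a) ≤ K*m*T := mul_le_mul_of_nonneg_left htaT (by positivity)
    have e2 : K*m*T ≤ K*m*(6*η) := mul_le_mul_of_nonneg_left hT6 (by positivity)
    have e3 : K*η*m ≤ (1/8)*m := mul_le_mul_of_nonneg_right hKη hm0.le
    have e4 : K*m*(6*η) = 6*(K*η*m) := by ring
    have h1 : K*m*(t - a) ≤ (6/8)*m := by linarith
    have f1 : C₁*Δ*(t - a) ≤ C₁*Δ*T := mul_le_mul_of_nonneg_left htaT (by positivity)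
    have f2 : C₁*Δ*T ≤ C₁*Δ*1 := mul_le_mul_of_nonneg_left hT1.le (by positivity)
    have f3 : C₁*Δ < C₁*(m/(4*(C₁+1))) := mul_lt_mul_of_pos_left hΔm hC10
    have f4 : C₁*(m/(4*(C₁+1))) < m/4 := by
      have hrw : C₁*(m/(4*(C₁+1))) = (C₁*m)/(4*(C₁+1)) := by ring
      rw [hrw, div_lt_div_iff₀ (by positivity) (by norm_num : (0:ℝ) < 4)]
      have hexp : m*(4*(C₁+1)) = C₁*m*4 + 4*m := by ring
      linarith
    have h2 : C₁*Δ*(t - a) < m/4 := by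
      have : C₁*Δ*1 = C₁*Δ := by ring
      linarith
    have hex : (-(C₁*Δ) - K*m)*(t - a) = -(C₁*Δ*(t - a)) - K*m*(t - a) := by ring
    linarith
  -- eventually negative just to the right of a
  have hev : ∀ᶠ y in nhdsWithin a (Ioi a), deriv g y < 0 := by
    have hslope_tendsto := hasDerivAt_iff_tendsto_slope.mp hu_a
    have h1 : ∀ᶠ y in nhdsWithin a {a}ᶜ, slope (deriv g) a y < 0 :=
      hslope_tendsto.eventually_lt_const hccalt
    have h2 : nhdsWithin a (Ioi a) ≤ nhdsWithin a {a}ᶜ :=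
      nhdsWithin_mono a (fun y hy => Set.mem_compl_singleton_iff.mpr (ne_of_gt (Set.mem_Ioi.mp hy)))
    filter_upwards [h1.filter_mono h2, self_mem_nhdsWithin] with y hy1 hy2
    rw [slope_def_field, hg'0, sub_zero] at hy1
    have hya : 0 < y - a := sub_pos.2 hy2
    by_contra hc
    push_neg at hc
    have := div_nonneg hc hya.le
    linarith
  -- there is a zero of deriv g in (a, a+T]
  have hzero : ∃ z₀ : ℝ, (a < z₀ ∧ z₀ ≤ a + T) ∧ deriv g z₀ = 0 := by
    by_contra hno
    push_neg at hno
    have hneg : ∀ y : ℝ, a < y → y ≤ a + T → deriv g y < 0 := by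
      intro y hy1 hy2
      rcases lt_trichotomy (deriv g y) 0 with hlt | heq | hgt
      · exact hlt
      · exact absurd heq (hno y ⟨hy1, hy2⟩)
      · exfalso
        have hIoo : Ioo a y ∈ nhdsWithin a (Ioi a) := Ioo_mem_nhdsGT_of_mem ⟨le_rfl, hy1⟩
        obtain ⟨y₁, hy₁neg, hy₁Ioo⟩ :=
          (hev.and (Filter.eventually_of_mem hIoo (fun _ hx => hx))).exists
        have hcont' : ContinuousOn (deriv g) (Icc y₁ y) := fun x hx =>
          (hu_contAt x (le_trans hy₁Ioo.1.le hx.1)).continuousWithinAt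
        have h0mem : (0:ℝ) ∈ Ioo (deriv g y₁) (deriv g y) := ⟨hy₁neg, hgt⟩
        obtain ⟨z, hzIoo, hz0⟩ := intermediate_value_Ioo hy₁Ioo.2.le hcont' h0mem
        exact absurd hz0 (hno z ⟨lt_trans hy₁Ioo.1 hzIoo.1, le_trans hzIoo.2.le hy2⟩)
    have hnonpos : ∀ y : ℝ, a ≤ y → y ≤ a + T → deriv g y ≤ 0 := by
      intro y h1 h2
      rcases eq_or_lt_of_le h1 with hEq | hlt
      · rw [← hEq, hg'0]
      · exact (hneg y hlt h2).le
    have hgtm := claim_lb (a + T) (by linarith) le_rfl hnonpos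
    -- MVT on [y0+η, a+T]
    have hy₁a : a < y0 μ σ + η := by rw [ha_def]; linarith
    have hy₁T : y0 μ σ + η < a + T := by rw [ha_def, hT_def]; linarith
    obtain ⟨ξ, hξIoo, hslope⟩ := exists_hasDerivAt_eq_slope (deriv g)
      (fun y => h μ σ δ y (deriv g y)) hy₁T
      (fun x hx => (hu_contAt x (le_trans hy₁a.le hx.1)).continuousWithinAt)
      (fun x hx => hu_hasDeriv x (lt_trans hy₁a hx.1))
    have hξa : a < ξ := lt_trans hy₁a hξIoo.1
    have hu_ξ1 : -m ≤ deriv g ξ := (hgtm ξ hξa.le hξIoo.2.le).le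
    have hu_ξ2 : deriv g ξ ≤ 0 := hnonpos ξ hξa.le hξIoo.2.le
    have hF4 := h_lb hμ hμσ hδ (hreg ξ hξIoo.2.le) (by linarith : -1 ≤ deriv g ξ) hu_ξ2
    rw [← hK_def] at hF4
    have hccξ : c₀ ≤ cc μ σ ξ := by
      rw [hc0_def]
      exact cc_le_cc μ σ hμ hσ2 hξIoo.1.le
    have hKu : -(c₀/8) ≤ K * deriv g ξ := by
      have := mul_le_mul_of_nonneg_left hu_ξ1 hK0.le
      have h1 : K * (-m) = -(K*m) := by ring
      linarith
    have hslope_lb : c₀/2 ≤ (deriv g (a + T) - deriv g (y0 μ σ + η))/(a + T - (y0 μ σ + η)) := by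
      rw [← hslope]
      show c₀/2 ≤ h μ σ δ ξ (deriv g ξ)
      linarith
    have hlen : a + T - (y0 μ σ + η) = 4*m/c₀ := by rw [ha_def, hT_def]; ring
    rw [hlen] at hslope_lb
    have h2m : 2*m ≤ deriv g (a + T) - deriv g (y0 μ σ + η) := by
      have hd := (le_div_iff₀ (by positivity : (0:ℝ) < 4*m/c₀)).mp hslope_lb
      have heq : c₀/2 * (4*m/c₀) = 2*m := by field_simp; ring
      linarith
    have hy₁m : -m < deriv g (y0 μ σ + η) := hgtm _ hy₁a.le hy₁T.le
    have hend : deriv g (a + T) < 0 := hneg (a + T) (by linarith) le_rfl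
    linarith
  -- conclusion
  obtain ⟨z₀, hz₀mem, hz₀0⟩ := hzero
  have hz₀S : z₀ ∈ {y : ℝ | a < y ∧ deriv g y = 0} := ⟨hz₀mem.1, hz₀0⟩
  have hbddS : BddBelow {y : ℝ | a < y ∧ deriv g y = 0} := ⟨a, fun y hy => hy.1.le⟩
  have hβ1 : a ≤ sInf {y : ℝ | a < y ∧ deriv g y = 0} :=
    le_csInf ⟨z₀, hz₀S⟩ (fun y hy => hy.1.le)
  have hβ2 : sInf {y : ℝ | a < y ∧ deriv g y = 0} ≤ a + T :=
    le_trans (csInf_le hbddS hz₀S) hz₀mem.2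
  set β := sInf {y : ℝ | a < y ∧ deriv g y = 0} with hβ_def
  constructor
  · linarith
  · rcases eq_or_lt_of_le hβ1 with hEq | hlt
    · rw [← hEq, hgC]; linarith
    · -- a < β; first show deriv g β = 0
      have hβ0 : deriv g β = 0 := by
        have hclos : β ∈ closure {y : ℝ | a < y ∧ deriv g y = 0} :=
          hβ_def ▸ csInf_mem_closure ⟨z₀, hz₀S⟩ hbddS
        obtain ⟨x, hxS, hxlim⟩ := mem_closure_iff_seq_limit.mp hclos
        have htend : Filter.Tendsto (fun n => deriv g (x n)) Filter.atTop (nhds (deriv g β)) :=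
          ((hu_contAt β hβ1).tendsto).comp hxlim
        have hconst : (fun n => deriv g (x n)) = fun _ => (0:ℝ) :=
          funext fun n => (hxS n).2
        rw [hconst] at htend
        exact tendsto_nhds_unique htend tendsto_const_nhds
      have hnegIoo : ∀ y : ℝ, a < y → y < β → deriv g y < 0 := by
        intro y hy1 hy2
        rcases lt_trichotomy (deriv g y) 0 with hl | he | hr
        · exact hl
        · exfalso
          have hyS : y ∈ {y : ℝ | a < y ∧ deriv g y = 0} := ⟨hy1, he⟩
          have := csInf_le hbddS hyS
          rw [← hβ_def] at this
          linarith
        · exfalso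
          have hIoo : Ioo a y ∈ nhdsWithin a (Ioi a) := Ioo_mem_nhdsGT_of_mem ⟨le_rfl, hy1⟩
          obtain ⟨y₁, hy₁neg, hy₁Ioo⟩ :=
            (hev.and (Filter.eventually_of_mem hIoo (fun _ hx => hx))).exists
          have hcont' : ContinuousOn (deriv g) (Icc y₁ y) := fun x hx =>
            (hu_contAt x (le_trans hy₁Ioo.1.le hx.1)).continuousWithinAt
          obtain ⟨z, hzIoo, hz0⟩ := intermediate_value_Ioo hy₁Ioo.2.le hcont' ⟨hy₁neg, hr⟩
          have hzS : z ∈ {y : ℝ | a < y ∧ deriv g y = 0} := ⟨lt_trans hy₁Ioo.1 hzIoo.1, hz0⟩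
          have := csInf_le hbddS hzS
          rw [← hβ_def] at this
          linarith [hzIoo.2]
      have hnonpos : ∀ y : ℝ, a ≤ y → y ≤ β → deriv g y ≤ 0 := by
        intro y hy1 hy2
        rcases eq_or_lt_of_le hy1 with hEq1 | hlt1
        · rw [← hEq1, hg'0]
        · rcases eq_or_lt_of_le hy2 with hEq2 | hlt2
          · rw [hEq2, hβ0]
          · exact (hnegIoo y hlt1 hlt2).le
      have hgtm := claim_lb β hβ1 hβ2 hnonpos
      -- MVT for g on [a, β]
      obtain ⟨ξ, hξIoo, hslope⟩ := exists_hasDerivAt_eq_slope g (deriv g) hlt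
        (hg.continuousOn.mono (fun x hx => hx.1))
        (fun x hx => hg_hasDeriv x hx.1)
      have h1 : -m < deriv g ξ := hgtm ξ hξIoo.1.le hξIoo.2.le
      have hβa0 : 0 < β - a := sub_pos.2 hlt
      have h2 : g β - g a = deriv g ξ * (β - a) := by
        rw [eq_div_iff (ne_of_gt hβa0)] at hslope
        linarith [hslope]
      rw [hgC] at h2
      have hstep : -(deriv g ξ) * (β - a) < m * (β - a) :=
        mul_lt_mul_of_pos_right (by linarith) hβa0
      have hmT : m * (β - a) ≤ m * T := mul_le_mul_of_nonneg_left (by linarith) hm0.le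
      have hm2η : m < 2 * η := by
        have := mul_lt_mul_of_pos_right hc02 hη0
        linarith
      have hmε : m < ε := by linarith
      have hmTm : m * T ≤ m * 1 := mul_le_mul_of_nonneg_left hT1.le hm0.le
      linarith [h2, hstep, hmT, hmTm, hmε, hm0]
end

section
/- For every M > 0 there exists Δ₀ > 0 such that for every Δ ≥ Δ₀ and every function g that is twice continuously differentiable on [y₀ − Δ, ∞) with g(y₀ − Δ) = C̄, g'(y₀ − Δ) = 0 and g''(y) = h(y, g'(y)) for all y ≥ y₀ − Δ, the first zero β̄_Δ := inf{ y > y₀ − Δ : g'(y) = 0 } of g' satisfies g(β̄_Δ) < −M. In other words, g(β̄_Δ) → −∞ as Δ → ∞. -/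
open Real Set

open Filter Topology

lemma exp_denom_pos (y : ℝ) : 0 < 1 + exp (-y) := by positivity

lemma h_factor (μ σ δ : ℝ) (hσ : σ^2 ≠ 0) (y z : ℝ) :
    h μ σ δ y z = (z - 1) * (-(2*δ/σ^2*(1 + exp y)) * z^2
      + (1 - 2*(μ/σ^2) + 2*δ/σ^2*(1 + exp y)) * z
      + (2*(μ/σ^2) - 2*(1/(1 + exp (-y))))) := by
  have h1 : (1 : ℝ) + exp (-y) ≠ 0 := (exp_denom_pos y).ne'
  unfold h; field_simp; ring

lemma h_zero_s10 (μ σ δ y : ℝ) (hσ : σ^2 ≠ 0) :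
    h μ σ δ y 0 = 2*(1/(1 + exp (-y))) - 2*(μ/σ^2) := by
  have h1 : (1 : ℝ) + exp (-y) ≠ 0 := (exp_denom_pos y).ne'
  unfold h; field_simp; ring

lemma sfun_y0 (μ σ : ℝ) (hμ : 0 < μ) (hμσ : μ < σ^2) :
    1/(1 + exp (-(y0 μ σ))) = μ/σ^2 := by
  have h1 : σ^2/μ - 1 > 0 := by
    rw [gt_iff_lt, sub_pos, lt_div_iff₀ hμ, one_mul]; exact hμσ
  have : exp (-(y0 μ σ)) = σ^2/μ - 1 := by rw [y0, neg_neg, exp_log h1]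
  rw [this]
  have hμ' : μ ≠ 0 := hμ.ne'
  field_simp
  ring

lemma qlow (k a s c3 L : ℝ) (hk : 0 < k) (hc3 : c3 = |1-2*a|) (ha : 0 < a) (ha1 : a < 1)
    (hs : 0 < s) (hs1 : s < 1) (hL : 2 ≤ L) (hLk : c3 + 4 ≤ k*(L-1)) :
    -k*(-L)^2 + (1-2*a+k)*(-L) + (2*a - 2*s) < 0 := by
  have h1 : -(c3) ≤ 1-2*a := by nlinarith [neg_abs_le (1-2*a), hc3]
  have h2 : 1-2*a ≤ c3 := by rw [hc3]; exact le_abs_self _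
  nlinarith [mul_nonneg hk.le (by nlinarith : (0:ℝ) ≤ L - 1)]

lemma qesc (k a s c3 L v : ℝ) (hk : 0 < k) (hc3 : c3 = |1-2*a|) (ha : 0 < a) (ha1 : a < 1)
    (hs : (1+a)/2 ≤ s) (hkc3 : c3 ≤ k) (hv : -L ≤ v) (hv0 : v < 0) :
    1 - a ≤ (v - 1) * (-k*v^2 + (1-2*a+k)*v + (2*a - 2*s)) := by
  have h1 : -(c3) ≤ 1-2*a := by nlinarith [neg_abs_le (1-2*a), hc3]
  have h2 : 1-2*a ≤ c3 := by rw [hc3]; exact le_abs_self _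
  have hq : -k*v^2 + (1-2*a+k)*v + (2*a - 2*s) ≤ a - 1 := by
    nlinarith [mul_nonneg hk.le (sq_nonneg v),
      mul_nonpos_of_nonneg_of_nonpos (by nlinarith : (0:ℝ) ≤ k - c3) hv0.le]
  nlinarith [mul_nonneg (by nlinarith : (0:ℝ) ≤ -v)
    (by nlinarith : (0:ℝ) ≤ -( -k*v^2 + (1-2*a+k)*v + (2*a - 2*s)))]

lemma qup (k a s s0 a1 K ε v : ℝ) (hk : 0 < k) (ha : 0 < a) (ha1' : a < 1)
    (hss0 : s ≤ s0) (ha1 : a1 = 2*a - 2*s0) (ha1pos : 0 < a1)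
    (hK : 1 + k ≤ K) (hKε : 6*K*ε ≤ a1) (hε : 0 < ε) (hε1 : ε ≤ 1)
    (hv1 : -ε ≤ v) (hv2 : v ≤ 0) :
    (v - 1) * (-k*v^2 + (1-2*a+k)*v + (2*a - 2*s)) ≤ -(a1/2) := by
  have hv2' : v^2 ≤ ε^2 := by nlinarith
  have hq1 : -(k*ε) ≤ -k*v^2 := by
    nlinarith [mul_le_mul_of_nonneg_left (show v^2 ≤ ε by nlinarith) hk.le]
  have hq2 : -((1+k)*ε) ≤ (1-2*a+k)*v := by
    nlinarith [mul_nonneg (by nlinarith : (0:ℝ) ≤ ε + v)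
      (by nlinarith : (0:ℝ) ≤ 1-2*a+k+ (1+k))]
  have hq : 2*a1/3 ≤ -k*v^2 + (1-2*a+k)*v + (2*a - 2*s) := by nlinarith
  nlinarith [mul_nonpos_of_nonpos_of_nonneg hv2 (le_trans (by nlinarith) hq)]

set_option maxHeartbeats 1000000 in
/-- Step 2 of the proof of Proposition p:FBVP: g(β̄_Δ) → -∞ as Δ → ∞. -/
theorem g_at_first_zero_tendsto_atBot
    (μ σ δ Cbar : ℝ) (hμ : 0 < μ) (hμσ : μ < σ^2) (hδ : 0 < δ) :
    ∀ M : ℝ, 0 < M → ∃ Δ₀ : ℝ, 0 < Δ₀ ∧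
      ∀ Δ : ℝ, Δ₀ ≤ Δ →
        ∀ g : ℝ → ℝ,
          ContDiffOn ℝ 2 g (Ici (y0 μ σ - Δ)) →
          g (y0 μ σ - Δ) = Cbar →
          deriv g (y0 μ σ - Δ) = 0 →
          (∀ y, y0 μ σ - Δ ≤ y → deriv (deriv g) y = h μ σ δ y (deriv g y)) →
          g (sInf {y | y0 μ σ - Δ < y ∧ deriv g y = 0}) < -M := by
  intro M hM
  have hσ2 : (0:ℝ) < σ^2 := hμ.trans hμσ
  have ha : 0 < μ/σ^2 := div_pos hμ hσ2
  have ha1' : μ/σ^2 < 1 := (div_lt_one hσ2).mpr hμσ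
  have hsy0 : 1/(1 + exp (-(y0 μ σ))) = μ/σ^2 := sfun_y0 μ σ hμ hμσ
  have hspos : ∀ y : ℝ, 0 < 1/(1 + exp (-y)) := fun y => by positivity
  have hslt1 : ∀ y : ℝ, 1/(1 + exp (-y)) < 1 := fun y => by
    rw [div_lt_one (exp_denom_pos y)]; nlinarith [exp_pos (-y)]
  have hsmono : ∀ ⦃u v : ℝ⦄, u ≤ v → 1/(1 + exp (-u)) ≤ 1/(1 + exp (-v))  := by
    intro u v huv
    apply one_div_le_one_div_of_le (exp_denom_pos v)
    have := exp_le_exp.mpr (neg_le_neg huv)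
    linarith
  have hssmono : ∀ ⦃u v : ℝ⦄, u < v → 1/(1 + exp (-u)) < 1/(1 + exp (-v)) := by
    intro u v huv
    apply one_div_lt_one_div_of_lt (exp_denom_pos v)
    have := exp_lt_exp.mpr (neg_lt_neg huv)
    linarith
  -- constants
  have ha1pos : 0 < 2*(μ/σ^2) - 2*(1/(1 + exp (-(y0 μ σ - 1)))) := by
    have := hssmono (show y0 μ σ - 1 < y0 μ σ by linarith)
    rw [hsy0] at this; linarith
  set a1 : ℝ := 2*(μ/σ^2) - 2*(1/(1 + exp (-(y0 μ σ - 1)))) with ha1def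
  obtain ⟨K, hKpos, hKb⟩ : ∃ K : ℝ, 0 < K ∧
      ∀ y, y ≤ y0 μ σ - 1 → 1 + 2*δ/σ^2*(1 + exp y) ≤ K := by
    refine ⟨1 + 2*δ/σ^2*(1 + exp (y0 μ σ)), by positivity, fun y hy => ?_⟩
    have h1 : exp y ≤ exp (y0 μ σ) := exp_le_exp.mpr (by linarith)
    have h2 : 0 < 2*δ/σ^2 := by positivity
    nlinarith
  obtain ⟨ε, hεpos, hε1, hKε⟩ : ∃ ε : ℝ, 0 < ε ∧ ε ≤ 1 ∧ 6*K*ε ≤ a1 := by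
    refine ⟨min 1 (a1/(6*K)), by positivity, min_le_left _ _, ?_⟩
    have h1 : min 1 (a1/(6*K)) ≤ a1/(6*K) := min_le_right _ _
    calc 6*K*min 1 (a1/(6*K)) ≤ 6*K*(a1/(6*K)) := by
          apply mul_le_mul_of_nonneg_left h1 (by positivity)
      _ = a1 := by field_simp
  set T : ℝ := 2*ε/a1 with hTdef
  have hTpos : 0 < T := by positivity
  set c3 : ℝ := |1 - 2*(μ/σ^2)| with hc3def
  have hc3nn : 0 ≤ c3 := abs_nonneg _
  set L : ℝ := max 2 (1 + (c3+4)/(2*δ/σ^2)) with hLdef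
  have hL2 : 2 ≤ L := le_max_left _ _
  have hLk : c3 + 4 ≤ 2*δ/σ^2*(L-1) := by
    have h1 : 1 + (c3+4)/(2*δ/σ^2) ≤ L := le_max_right _ _
    have h2 : 0 < 2*δ/σ^2 := by positivity
    calc c3 + 4 = 2*δ/σ^2 * ((c3+4)/(2*δ/σ^2)) := (mul_div_cancel₀ _ h2.ne').symm
      _ ≤ 2*δ/σ^2*(L-1) := by
          apply mul_le_mul_of_nonneg_left _ h2.le
          linarith
  -- the time y1 after which the solution escapes upward
  obtain ⟨y1, hy1a, hy1b⟩ : ∃ y1 : ℝ, y0 μ σ + 1 ≤ y1 ∧ ∀ y, y1 ≤ y →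
      (1 + μ/σ^2)/2 ≤ 1/(1 + exp (-y)) ∧ c3 ≤ 2*δ/σ^2*(1 + exp y) := by
    have l1 : Tendsto (fun y : ℝ => 1/(1 + exp (-y))) atTop (𝓝 1) := by
      have : Tendsto (fun y : ℝ => exp (-y)) atTop (𝓝 0) :=
        Real.tendsto_exp_atBot.comp tendsto_neg_atTop_atBot
      have h2 : Tendsto (fun y : ℝ => 1 + exp (-y)) atTop (𝓝 1) := by
        simpa using tendsto_const_nhds.add this
      simpa [one_div] using h2.inv₀ (by norm_num)
    have l2 : Tendsto (fun y : ℝ => 2*δ/σ^2*(1 + exp y)) atTop atTop := by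
      apply Tendsto.const_mul_atTop (by positivity)
      exact tendsto_atTop_add_const_left _ 1 Real.tendsto_exp_atTop
    have e1 : ∀ᶠ y in atTop, (1 + μ/σ^2)/2 ≤ 1/(1 + exp (-y)) :=
      l1.eventually_const_le (by linarith)
    have e2 : ∀ᶠ y in atTop, c3 ≤ 2*δ/σ^2*(1 + exp y) := l2.eventually_ge_atTop _
    have e3 : ∀ᶠ y in atTop, y0 μ σ + 1 ≤ y := eventually_ge_atTop _
    obtain ⟨y1, hy1⟩ := eventually_atTop.mp ((e1.and e2).and e3)
    exact ⟨max y1 (y0 μ σ + 1), le_max_right _ _, fun y hy =>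
      (hy1 y (le_trans (le_max_left _ _) hy)).1⟩
  refine ⟨T + 2 + (M + |Cbar| + 1)/ε, by positivity, ?_⟩
  intro Δ hΔ g hg hgC hg0 hode
  set x0 : ℝ := y0 μ σ - Δ with hx0def
  have hΔT : T + 2 ≤ Δ := by
    have : 0 ≤ (M + |Cbar| + 1)/ε := by positivity
    linarith
  have hΔpos : 0 < Δ := by linarith
  have hx0y0 : x0 < y0 μ σ := by rw [hx0def]; linarith
  have hm12 : x0 + T ≤ y0 μ σ - 1 := by rw [hx0def]; linarith
  -- regularity
  have hgo : ContDiffOn ℝ 2 g (Ioi x0) := hg.mono Ioi_subset_Ici_self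
  have hpo : ContDiffOn ℝ 1 (deriv g) (Ioi x0) := hgo.deriv_of_isOpen isOpen_Ioi (by norm_num)
  have hgdiff : ∀ y, x0 < y → DifferentiableAt ℝ g y := fun y hy =>
    (hgo.differentiableOn (by norm_num)).differentiableAt (isOpen_Ioi.mem_nhds hy)
  have hpdiff : ∀ y, x0 < y → DifferentiableAt ℝ (deriv g) y := fun y hy =>
    (hpo.differentiableOn (by norm_num)).differentiableAt (isOpen_Ioi.mem_nhds hy)
  have hpderiv : ∀ y, x0 < y → HasDerivAt (deriv g) (h μ σ δ y (deriv g y)) y := fun y hy =>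
    hode y hy.le ▸ (hpdiff y hy).hasDerivAt
  have hAneg : ∀ y, y < y0 μ σ → h μ σ δ y 0 < 0 := by
    intro y hy
    rw [h_zero_s10 μ σ δ y hσ2.ne']
    have := hssmono hy
    rw [hsy0] at this
    linarith
  have hAx0 : h μ σ δ x0 (deriv g x0) < 0 := by rw [hg0]; exact hAneg x0 hx0y0
  have hdx0 : DifferentiableAt ℝ (deriv g) x0 := by
    by_contra hc
    have h1 := deriv_zero_of_not_differentiableAt hc
    rw [hode x0 le_rfl] at h1
    exact hAx0.ne h1
  have hpx0 : HasDerivAt (deriv g) (h μ σ δ x0 (deriv g x0)) x0 :=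
    hode x0 le_rfl ▸ hdx0.hasDerivAt
  have hpcont : ContinuousOn (deriv g) (Ici x0) := by
    intro y hy
    rcases eq_or_lt_of_le (mem_Ici.mp hy) with rfl | hlt
    · exact hdx0.continuousAt.continuousWithinAt
    · exact ((hpdiff y hlt).continuousAt).continuousWithinAt
  -- the derivative becomes negative immediately after x0
  have hafter : ∀ z, x0 < z → ∃ y, y ∈ Ioo x0 z ∧ deriv g y < 0 := by
    intro z hz
    have hslope : Tendsto (slope (deriv g) x0) (𝓝[>] x0) (𝓝 (h μ σ δ x0 (deriv g x0))) :=
      (hasDerivAt_iff_tendsto_slope.mp hpx0).mono_left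
        (nhdsWithin_mono _ (fun y hy => ne_of_gt hy))
    have hev1 : ∀ᶠ y in 𝓝[>] x0, slope (deriv g) x0 y < 0 := hslope.eventually_lt_const hAx0
    have hev2 : ∀ᶠ y in 𝓝[>] x0, y ∈ Ioo x0 z :=
      Filter.eventually_mem_set.mpr (Ioo_mem_nhdsGT_of_mem ⟨le_rfl, hz⟩)
    obtain ⟨y, hy1, hy2⟩ := (hev1.and hev2).exists
    refine ⟨y, hy2, ?_⟩
    rw [slope_def_field, hg0, sub_zero] at hy1
    by_contra hc
    push_neg at hc
    have : 0 ≤ deriv g y / (y - x0) := div_nonneg hc (by linarith [hy2.1])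
    linarith
  -- lower barrier: the derivative never goes below -L
  have hbarL : ∀ y : ℝ, 0 < h μ σ δ y (-L) := by
    intro y
    rw [h_factor μ σ δ hσ2.ne' y (-L)]
    have hky : 0 < 2*δ/σ^2*(1+exp y) := by positivity
    have hk2 : (0:ℝ) < 2*δ/σ^2 := by positivity
    have hk1 : 2*δ/σ^2*(L-1) ≤ 2*δ/σ^2*(1+exp y)*(L-1) := by nlinarith [exp_pos y]
    have hq := qlow (2*δ/σ^2*(1+exp y)) (μ/σ^2) (1/(1+exp (-y))) c3 L hky hc3def ha ha1'
      (hspos y) (hslt1 y) hL2 (le_trans hLk hk1)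
    exact mul_pos_of_neg_of_neg (by linarith : -L - 1 < 0) hq
  have hlow : ∀ y, x0 ≤ y → -L < deriv g y := by
    by_contra hc
    push_neg at hc
    obtain ⟨z, hz1, hz2⟩ := hc
    have hzx0 : x0 < z := by
      rcases eq_or_lt_of_le hz1 with rfl | hlt
      · rw [hg0] at hz2; linarith
      · exact hlt
    have hEclosed : IsClosed (Icc x0 z ∩ deriv g ⁻¹' (Iic (-L))) :=
      (hpcont.mono Icc_subset_Ici_self).preimage_isClosed_of_isClosed isClosed_Icc isClosed_Iic
    have hEne : (Icc x0 z ∩ deriv g ⁻¹' (Iic (-L))).Nonempty := ⟨z, ⟨hz1, le_rfl⟩, hz2⟩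
    have hEbdd : BddBelow (Icc x0 z ∩ deriv g ⁻¹' (Iic (-L))) :=
      BddBelow.mono inter_subset_left bddBelow_Icc
    obtain ⟨⟨hw1, hw2⟩, hw3⟩ := hEclosed.csInf_mem hEne hEbdd
    set w := sInf (Icc x0 z ∩ deriv g ⁻¹' (Iic (-L))) with hwdef
    rw [Set.mem_preimage, Set.mem_Iic] at hw3
    have hwx0 : x0 < w := by
      rcases eq_or_lt_of_le hw1 with heq | hlt
      · exfalso; rw [← heq, hg0] at hw3; linarith
      · exact hlt
    have hbefore : ∀ y, y ∈ Ico x0 w → -L < deriv g y := by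
      rintro y ⟨hy1, hy2⟩
      by_contra hcy
      push_neg at hcy
      exact absurd (csInf_le hEbdd ⟨⟨hy1, hy2.le.trans hw2⟩, hcy⟩) (not_le.mpr hy2)
    have hpw : deriv g w = -L := by
      refine le_antisymm hw3 ?_
      have ht : Tendsto (deriv g) (𝓝[<] w) (𝓝 (deriv g w)) :=
        ((hpdiff w hwx0).continuousAt.tendsto).mono_left nhdsWithin_le_nhds
      refine ge_of_tendsto ht ?_
      filter_upwards [Filter.eventually_mem_set.mpr
        (Ioo_mem_nhdsLT_of_mem ⟨hwx0, le_rfl⟩)] with y hy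
      exact (hbefore y ⟨hy.1.le, hy.2⟩).le
    have hder := hpderiv w hwx0
    rw [hpw] at hder
    have hcontra : h μ σ δ w (-L) ≤ 0 := by
      have hslope : Tendsto (slope (deriv g) w) (𝓝[<] w) (𝓝 (h μ σ δ w (-L))) :=
        (hasDerivAt_iff_tendsto_slope.mp hder).mono_left
          (nhdsWithin_mono _ (fun y hy => ne_of_lt hy))
      refine le_of_tendsto hslope ?_
      filter_upwards [Filter.eventually_mem_set.mpr
        (Ioo_mem_nhdsLT_of_mem ⟨hwx0, le_rfl⟩)] with y hy
      rw [slope_def_field, hpw]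
      have h1 : 0 < deriv g y - -L := by linarith [hbefore y ⟨hy.1.le, hy.2⟩]
      exact le_of_lt (div_neg_of_pos_of_neg h1 (by linarith [hy.2]))
    linarith [hbarL w]
  -- the derivative is negative strictly between x0 and y0
  have hneg : ∀ z, x0 < z → z < y0 μ σ → deriv g z < 0 := by
    intro z hz1 hz2
    by_contra hcz
    push_neg at hcz
    obtain ⟨y', hy'1, hy'2⟩ := hafter z hz1
    have hEclosed : IsClosed (Icc y' z ∩ deriv g ⁻¹' (Ici 0)) :=
      (hpcont.mono (Icc_subset_Ici_self.trans (Ici_subset_Ici.mpr hy'1.1.le))).preimage_isClosed_of_isClosed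
        isClosed_Icc isClosed_Ici
    have hEne : (Icc y' z ∩ deriv g ⁻¹' (Ici 0)).Nonempty := ⟨z, ⟨hy'1.2.le, le_rfl⟩, hcz⟩
    have hEbdd : BddBelow (Icc y' z ∩ deriv g ⁻¹' (Ici 0)) :=
      BddBelow.mono inter_subset_left bddBelow_Icc
    obtain ⟨⟨hw1, hw2⟩, hw3⟩ := hEclosed.csInf_mem hEne hEbdd
    set w := sInf (Icc y' z ∩ deriv g ⁻¹' (Ici 0)) with hwdef
    rw [Set.mem_preimage, Set.mem_Ici] at hw3
    have hwy' : y' < w := by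
      rcases eq_or_lt_of_le hw1 with heq | hlt
      · exfalso; rw [← heq] at hw3; linarith
      · exact hlt
    have hwx0 : x0 < w := hy'1.1.trans hwy'
    have hbefore : ∀ y, y ∈ Ico y' w → deriv g y < 0 := by
      rintro y ⟨hy1, hy2⟩
      by_contra hcy
      push_neg at hcy
      exact absurd (csInf_le hEbdd ⟨⟨hy1, hy2.le.trans hw2⟩, hcy⟩) (not_le.mpr hy2)
    have hpw : deriv g w = 0 := by
      refine le_antisymm ?_ hw3
      have ht : Tendsto (deriv g) (𝓝[<] w) (𝓝 (deriv g w)) :=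
        ((hpdiff w hwx0).continuousAt.tendsto).mono_left nhdsWithin_le_nhds
      refine le_of_tendsto ht ?_
      filter_upwards [Filter.eventually_mem_set.mpr
        (Ioo_mem_nhdsLT_of_mem ⟨hwy', le_rfl⟩)] with y hy
      exact (hbefore y ⟨hy.1.le, hy.2⟩).le
    have hder := hpderiv w hwx0
    rw [hpw] at hder
    have hcontra : 0 ≤ h μ σ δ w 0 := by
      have hslope : Tendsto (slope (deriv g) w) (𝓝[<] w) (𝓝 (h μ σ δ w 0)) :=
        (hasDerivAt_iff_tendsto_slope.mp hder).mono_left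
          (nhdsWithin_mono _ (fun y hy => ne_of_lt hy))
      refine ge_of_tendsto hslope ?_
      filter_upwards [Filter.eventually_mem_set.mpr
        (Ioo_mem_nhdsLT_of_mem ⟨hwy', le_rfl⟩)] with y hy
      rw [slope_def_field, hpw, sub_zero]
      exact div_nonneg_of_nonpos (hbefore y ⟨hy.1.le, hy.2⟩).le (by linarith [hy.2])
    exact absurd hcontra (not_le.mpr (hAneg w (lt_of_le_of_lt hw2 hz2)))
  -- the set of zeros after x0 is nonempty
  have hSne : {y | x0 < y ∧ deriv g y = 0}.Nonempty := by
    by_contra hSe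
    have hnz : ∀ z, x0 < z → deriv g z ≠ 0 := fun z hz hz0 => hSe ⟨z, hz, hz0⟩
    have hneg2 : ∀ z, x0 < z → deriv g z < 0 := by
      intro z hz
      rcases lt_trichotomy (deriv g z) 0 with hlt | heq | hgt
      · exact hlt
      · exact absurd heq (hnz z hz)
      · exfalso
        obtain ⟨y', hy'1, hy'2⟩ := hafter z hz
        obtain ⟨w, hw1, hw2⟩ := intermediate_value_Ioo hy'1.2.le
          (hpcont.mono (Icc_subset_Ici_self.trans (Ici_subset_Ici.mpr hy'1.1.le))) ⟨hy'2, hgt⟩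
        exact hnz w (hy'1.1.trans hw1.1) hw2
    have hZy1 : y1 ≤ y1 + (L+1)/(1 - μ/σ^2) := le_add_of_nonneg_right (div_nonneg (by linarith) (by linarith))
    have hx0y1 : x0 < y1 := by linarith
    have hesc : ∀ y v, y1 ≤ y → -L ≤ v → v < 0 → 1 - μ/σ^2 ≤ h μ σ δ y v := by
      intro y v hy hv1 hv2
      rw [h_factor μ σ δ hσ2.ne' y v]
      exact qesc _ _ _ c3 L v (by positivity) hc3def ha ha1' (hy1b y hy).1 (hy1b y hy).2 hv1 hv2
    have hmono : MonotoneOn (fun y => deriv g y - (1 - μ/σ^2)*y)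
        (Icc y1 (y1 + (L+1)/(1 - μ/σ^2))) := by
      apply monotoneOn_of_deriv_nonneg (convex_Icc _ _)
      · exact (hpcont.mono fun y hy => (hx0y1.trans_le hy.1).le).sub
          ((continuous_const.mul continuous_id).continuousOn)
      · rw [interior_Icc]
        rintro y hy
        exact ((hpdiff y (hx0y1.trans hy.1)).sub
          ((differentiableAt_id.const_mul _))).differentiableWithinAt
      · rw [interior_Icc]
        rintro y hy
        have hd : HasDerivAt (fun y => deriv g y - (1 - μ/σ^2)*y)
            (h μ σ δ y (deriv g y) - (1 - μ/σ^2)) y := by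
          have := ((hasDerivAt_id y).const_mul (1 - μ/σ^2))
          exact ((hpderiv y (hx0y1.trans hy.1)).sub this).congr_deriv (by ring)
        rw [hd.deriv]
        have := hesc y (deriv g y) hy.1.le (hlow y (by linarith [hy.1])).le
          (hneg2 y (hx0y1.trans hy.1))
        linarith
    have h1 := hmono (left_mem_Icc.mpr hZy1) (right_mem_Icc.mpr hZy1) hZy1
    dsimp only at h1
    have h2 : (1 - μ/σ^2)*(y1 + (L+1)/(1 - μ/σ^2)) - (1 - μ/σ^2)*y1 = L + 1 := by
      have hne : (1 : ℝ) - μ/σ^2 ≠ 0 := sub_ne_zero.mpr (by linarith)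
      rw [mul_add, mul_div_cancel₀ _ hne]
      ring
    have h3 := hlow y1 (by linarith)
    have h4 := hneg2 (y1 + (L+1)/(1 - μ/σ^2)) (by linarith)
    linarith
  have hSlb : ∀ z ∈ {y | x0 < y ∧ deriv g y = 0}, y0 μ σ ≤ z := by
    rintro z ⟨hz1, hz2⟩
    by_contra hcz
    exact (hneg z hz1 (lt_of_not_ge hcz)).ne hz2
  have hβy0 : y0 μ σ ≤ sInf {y | x0 < y ∧ deriv g y = 0} := le_csInf hSne hSlb
  set β := sInf {y | x0 < y ∧ deriv g y = 0} with hβdef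
  have hβx0 : x0 ≤ β := by linarith
  have hSbdd : BddBelow {y | x0 < y ∧ deriv g y = 0} := ⟨y0 μ σ, hSlb⟩
  -- the derivative is ≤ 0 on [x0, β]
  have hple : ∀ y, y ∈ Icc x0 β → deriv g y ≤ 0 := by
    rintro y ⟨hy1, hy2⟩
    rcases eq_or_lt_of_le hy1 with rfl | hlt
    · exact le_of_eq hg0
    · by_contra hcy
      push_neg at hcy
      obtain ⟨y', hy'1, hy'2⟩ := hafter y hlt
      obtain ⟨w, hw1, hw2⟩ := intermediate_value_Ioo hy'1.2.le
        (hpcont.mono (Icc_subset_Ici_self.trans (Ici_subset_Ici.mpr hy'1.1.le))) ⟨hy'2, hcy⟩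
      have hwβ : β ≤ w := csInf_le hSbdd ⟨hy'1.1.trans hw1.1, hw2⟩
      linarith [hw1.2]
  -- upper barrier bound for h
  have hbarU : ∀ y v, y ≤ y0 μ σ - 1 → -ε ≤ v → v ≤ 0 → h μ σ δ y v ≤ -(a1/2) := by
    intro y v h1 h2 h3
    rw [h_factor μ σ δ hσ2.ne' y v]
    exact qup _ _ _ (1/(1 + exp (-(y0 μ σ - 1)))) a1 K ε v (by positivity) ha ha1'
      (hsmono h1) ha1def ha1pos (hKb y h1) hKε hεpos hε1 h2 h3
  have hTe : (a1/2)*T = ε := by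
    rw [hTdef]
    field_simp
  -- the derivative stays below -ε on the middle interval
  have hup : ∀ y, y ∈ Icc (x0 + T) (y0 μ σ - 1) → deriv g y ≤ -ε := by
    rintro yb ⟨hb1, hb2⟩
    by_contra hcb
    push_neg at hcb
    have hx0b : x0 < yb := by linarith
    have hybβ : yb ≤ β := by linarith
    have hanti : ∀ c d, x0 ≤ c → d ≤ yb → (∀ y, y ∈ Ioo c d → -ε < deriv g y) →
        AntitoneOn (fun y => deriv g y + (a1/2)*y) (Icc c d) := by
      intro c d hc hd hmid
      apply antitoneOn_of_deriv_nonpos (convex_Icc _ _)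
      · exact (hpcont.mono fun y hy => hc.trans hy.1).add
          ((continuous_const.mul continuous_id).continuousOn)
      · rw [interior_Icc]
        intro y hy
        exact ((hpdiff y (lt_of_le_of_lt hc hy.1)).add
          (differentiableAt_id.const_mul _)).differentiableWithinAt
      · rw [interior_Icc]
        intro y hy
        have hyx0 : x0 < y := lt_of_le_of_lt hc hy.1
        have hd' : HasDerivAt (fun y => deriv g y + (a1/2)*y)
            (h μ σ δ y (deriv g y) + a1/2) y := by
          have h0 := (hasDerivAt_id y).const_mul (a1/2)
          exact ((hpderiv y hyx0).add h0).congr_deriv (by ring)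
        rw [hd'.deriv]
        have hyb' : y ≤ y0 μ σ - 1 := by linarith [hy.2, hd]
        have hple' : deriv g y ≤ 0 := hple y ⟨hyx0.le, by linarith [hy.2, hd, hybβ]⟩
        have := hbarU y (deriv g y) hyb' (hmid y hy).le hple'
        linarith
    by_cases hE : (Icc x0 yb ∩ deriv g ⁻¹' (Iic (-ε))).Nonempty
    · have hEclosed : IsClosed (Icc x0 yb ∩ deriv g ⁻¹' (Iic (-ε))) :=
        (hpcont.mono Icc_subset_Ici_self).preimage_isClosed_of_isClosed isClosed_Icc isClosed_Iic
      have hEbdd : BddAbove (Icc x0 yb ∩ deriv g ⁻¹' (Iic (-ε))) :=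
        BddAbove.mono inter_subset_left bddAbove_Icc
      obtain ⟨⟨hc1, hc2⟩, hc3⟩ := hEclosed.csSup_mem hE hEbdd
      set yc := sSup (Icc x0 yb ∩ deriv g ⁻¹' (Iic (-ε))) with hycdef
      rw [Set.mem_preimage, Set.mem_Iic] at hc3
      have hcyb : yc < yb := by
        rcases eq_or_lt_of_le hc2 with heq | hlt
        · exfalso; rw [heq] at hc3; linarith
        · exact hlt
      have hmid : ∀ y, y ∈ Ioo yc yb → -ε < deriv g y := by
        rintro y ⟨hy1, hy2⟩
        by_contra hcy
        push_neg at hcy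
        exact absurd (le_csSup hEbdd ⟨⟨hc1.trans hy1.le, hy2.le⟩, hcy⟩) (not_le.mpr hy1)
      have h1 := hanti yc yb hc1 le_rfl hmid (left_mem_Icc.mpr hcyb.le)
        (right_mem_Icc.mpr hcyb.le) hcyb.le
      dsimp only at h1
      have h2 : a1/2*yc ≤ a1/2*yb := mul_le_mul_of_nonneg_left hcyb.le (div_nonneg ha1pos.le (by norm_num))
      linarith
    · have hmid : ∀ y, y ∈ Ioo x0 yb → -ε < deriv g y := by
        rintro y ⟨hy1, hy2⟩
        by_contra hcy
        push_neg at hcy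
        exact hE ⟨y, ⟨⟨hy1.le, hy2.le⟩, hcy⟩⟩
      have hmem : x0 + T ∈ Icc x0 yb := ⟨by linarith, hb1⟩
      have h1 := hanti x0 yb le_rfl le_rfl hmid (left_mem_Icc.mpr (by linarith : x0 ≤ yb))
        hmem (by linarith : x0 ≤ x0 + T)
      dsimp only at h1
      rw [hg0] at h1
      have hcontr : deriv g (x0+T) ≤ -ε := by nlinarith [hTe]
      exact hE ⟨x0+T, hmem, hcontr⟩
  -- assembling the estimate
  have hgmono : AntitoneOn g (Icc x0 β) := by
    apply antitoneOn_of_deriv_nonpos (convex_Icc _ _)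
    · exact hg.continuousOn.mono Icc_subset_Ici_self
    · rw [interior_Icc]
      exact fun y hy => (hgdiff y hy.1).differentiableWithinAt
    · rw [interior_Icc]
      exact fun y hy => hple y ⟨hy.1.le, hy.2.le⟩
  have hx0m1 : x0 ≤ x0 + T := by linarith
  have hm2β : y0 μ σ - 1 ≤ β := by linarith
  have k1 : g β ≤ g (y0 μ σ - 1) := hgmono ⟨by linarith, hm2β⟩ ⟨hβx0, le_rfl⟩ hm2β
  have hψ : AntitoneOn (fun y => g y + ε*y) (Icc (x0+T) (y0 μ σ - 1)) := by
    apply antitoneOn_of_deriv_nonpos (convex_Icc _ _)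
    · exact (hg.continuousOn.mono fun y hy => le_trans hx0m1 hy.1).add
        ((continuous_const.mul continuous_id).continuousOn)
    · rw [interior_Icc]
      intro y hy
      exact ((hgdiff y (by linarith [hy.1])).add
        (differentiableAt_id.const_mul _)).differentiableWithinAt
    · rw [interior_Icc]
      intro y hy
      have hd' : HasDerivAt (fun y => g y + ε*y) (deriv g y + ε) y := by
        have h0 := (hasDerivAt_id y).const_mul ε
        exact (((hgdiff y (by linarith [hy.1])).hasDerivAt).add h0).congr_deriv (by ring)
      rw [hd'.deriv]
      have := hup y ⟨hy.1.le, hy.2.le⟩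
      linarith
  have k2 := hψ (left_mem_Icc.mpr hm12) (right_mem_Icc.mpr hm12) hm12
  dsimp only at k2
  have k3 : g (x0+T) ≤ Cbar := by
    have h1 := hgmono (left_mem_Icc.mpr hβx0) ⟨hx0m1, by linarith⟩ hx0m1
    rw [hgC] at h1
    exact h1
  have h7 : ε*((M + |Cbar| + 1)/ε) = M + |Cbar| + 1 := by field_simp
  have hεΔ : M + |Cbar| + 1 + ε ≤ ε*(Δ - 1 - T) := by
    have h5 : 1 + (M + |Cbar| + 1)/ε ≤ Δ - 1 - T := by linarith
    have h6 : ε*(1 + (M + |Cbar| + 1)/ε) ≤ ε*(Δ - 1 - T) :=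
      mul_le_mul_of_nonneg_left h5 hεpos.le
    rw [mul_add, h7, mul_one] at h6
    linarith
  have h8 : ε*(y0 μ σ - 1) - ε*(x0+T) = ε*(Δ - 1 - T) := by rw [hx0def]; ring
  have hCb := le_abs_self Cbar
  linarith [k1, k2, k3]
end

section
/- Let σ > 0, μ, δ ∈ ℝ, and let x ∈ ℝ. Let f be twice differentiable at x with p := f'(x) satisfying p ∉ {0, 1}, and set v := f(x), σ̃ := σ/(p − 1), and μ̃ := −(μ − σ²/2) + (σ²/2)·(p/(p − 1))²·(1 − e^{−v})/(1 + e^{−v}). Then (1/2)(σ + σ̃)² − (μ − σ²/2 + μ̃) = (σ + σ̃)²/(1 + e^{v}) ≠ 0, and the condition μ − σ²/2 + μ̃ + δ(σ + σ̃)²/((1/2)(σ + σ̃)² − (μ − σ²/2 + μ̃)) = f'(x)·μ̃ + f''(x)·σ̃²/2 (condition (cond2)) holds if and only if f''(x) = (2δ/σ²)(1+e^{v}) + (2μ/σ² − 1 − (4δ/σ²)(1+e^{v}))·p + (−4μ/σ² + 2/(1+e^{−v}) + 1 + (2δ/σ²)(1+e^{v}))·p² + (2μ/σ² − 2/(1+e^{−v}))·p³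 (the ODE (odef)). -/
open Real

/-- With σ̃ and μ̃ determined by (cond1) and (cond3), condition (cond2) is
equivalent to the ODE (odef). -/
theorem cond2_iff_odef
    (μ σ δ x p v σt μt : ℝ) (hσ : 0 < σ)
    (f : ℝ → ℝ)
    (hf : DifferentiableAt ℝ f x) (hf' : DifferentiableAt ℝ (deriv f) x)
    (hp : p = deriv f x) (hp0 : p ≠ 0) (hp1 : p ≠ 1)
    (hv : v = f x)
    (hσt : σt = σ/(p - 1))
    (hμt : μt = -(μ - σ^2/2) + (σ^2/2) * (p/(p - 1))^2 * ((1 - exp (-v))/(1 + exp (-v)))) :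
    ((1/2)*(σ + σt)^2 - (μ - σ^2/2 + μt) = (σ + σt)^2/(1 + exp v)) ∧
    (σ + σt)^2/(1 + exp v) ≠ 0 ∧
    ((μ - σ^2/2 + μt + δ*(σ + σt)^2/((1/2)*(σ + σt)^2 - (μ - σ^2/2 + μt))
        = deriv f x * μt + deriv (deriv f) x * σt^2/2)
      ↔ deriv (deriv f) x =
          (2*δ/σ^2)*(1 + exp v)
          + ((2*μ)/σ^2 - 1 - (4*δ/σ^2)*(1 + exp v)) * p
          + (-(4*μ)/σ^2 + 2/(1 + exp (-v)) + 1 + (2*δ/σ^2)*(1 + exp v)) * p^2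
          + ((2*μ)/σ^2 - 2/(1 + exp (-v))) * p^3) := by
  have hσ0 : σ ≠ 0 := ne_of_gt hσ
  have hE : (0:ℝ) < exp v := exp_pos v
  have hE0 : exp v ≠ 0 := ne_of_gt hE
  have h1E : (1:ℝ) + exp v ≠ 0 := by positivity
  have hEneg : exp (-v) = (exp v)⁻¹ := exp_neg v
  have h1Ei : (1:ℝ) + (exp v)⁻¹ ≠ 0 := by positivity
  have hpm1 : p - 1 ≠ 0 := sub_ne_zero.mpr hp1
  set D := deriv (deriv f) x with hD
  rw [← hp]
  subst hσt hμt
  rw [hEneg]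
  have hpart1 : (1/2)*(σ + σ/(p-1))^2 -
      (μ - σ^2/2 + (-(μ - σ^2/2) + (σ^2/2) * (p/(p - 1))^2 *
        ((1 - (exp v)⁻¹)/(1 + (exp v)⁻¹))))
      = (σ + σ/(p-1))^2/(1 + exp v) := by
    field_simp
    ring
  refine ⟨hpart1, ?_, ?_⟩
  · apply div_ne_zero _ h1E
    have : σ + σ/(p-1) = σ*p/(p-1) := by field_simp; ring
    rw [this]
    positivity
  · rw [hpart1]
    have hk : (σ/(p-1))^2/2 ≠ 0 := by positivity
    have hnum : (σ + σ/(p-1))^2/(1 + exp v) ≠ 0 := by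
      apply div_ne_zero _ h1E
      have : σ + σ/(p-1) = σ*p/(p-1) := by field_simp; ring
      rw [this]; positivity
    set A := μ - σ^2/2 + (-(μ - σ^2/2) + (σ^2/2) * (p/(p - 1))^2 *
        ((1 - (exp v)⁻¹)/(1 + (exp v)⁻¹))) + δ*(σ + σ/(p-1))^2/((σ + σ/(p-1))^2/(1 + exp v)) with hA
    set B := p * (-(μ - σ^2/2) + (σ^2/2) * (p/(p - 1))^2 *
        ((1 - (exp v)⁻¹)/(1 + (exp v)⁻¹))) with hB
    have step1 : (A = B + D * (σ/(p-1))^2/2) ↔ D * ((σ/(p-1))^2/2) = A - B := by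
      constructor <;> intro h <;> linarith
    rw [step1, ← eq_div_iff hk]
    have : (A - B) / ((σ/(p-1))^2/2)
        = (2*δ/σ^2)*(1 + exp v)
          + ((2*μ)/σ^2 - 1 - (4*δ/σ^2)*(1 + exp v)) * p
          + (-(4*μ)/σ^2 + 2/(1 + (exp v)⁻¹) + 1 + (2*δ/σ^2)*(1 + exp v)) * p^2
          + ((2*μ)/σ^2 - 2/(1 + (exp v)⁻¹)) * p^3 := by
      have hS : (σ + σ/(p-1))^2 ≠ 0 := by
        have h2 : σ + σ/(p-1) = σ*p/(p-1) := by field_simp; ring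
        rw [h2]; positivity
      have hδ : δ*(σ + σ/(p-1))^2/((σ + σ/(p-1))^2/(1 + exp v)) = δ*(1 + exp v) := by
        rw [div_div_eq_mul_div, mul_right_comm, mul_div_cancel_right₀ _ hS]
      rw [hA, hB, hδ]
      field_simp
      ring
    rw [this]
end
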